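/- arXiv:1903.07082 — 6 statements merged into one kernel-verified Lean document; each statement's English description precedes it below -/
import Mathlib

section
/- For a Binomial(n,x) random variable S and integer k with k < x·n, the lower tail satisfies e^{-n·kl(k/n, x)}/(n+1) ≤ P(S ≤ k) ≤ e^{-n·kl(k/n, x)}. -/
/-- Binary Kullback-Leibler divergence kl(p,q). -/
noncomputable def kl (p q : ℝ) : ℝ :=
  p * Real.log (p / q) + (1 - p) * Real.log ((1 - p) / (1 - q))

/-- pmf of the Binomial(n,x) distribution. -/
noncomputable def binomPMF (n : ℕ) (x : ℝ) (s : ℕ) : ℝ :=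
  (n.choose s : ℝ) * x ^ s * (1 - x) ^ (n - s)

/-- CDF of the Binomial(n,x) distribution: P(S ≤ k). -/
noncomputable def binomCDF (n : ℕ) (x : ℝ) (k : ℕ) : ℝ :=
  ∑ s ∈ Finset.range (k + 1), binomPMF n x s

lemma binomPMF_nonneg {n : ℕ} {p : ℝ} (hp0 : 0 ≤ p) (hp1 : p ≤ 1) (s : ℕ) :
    0 ≤ binomPMF n p s := by
  unfold binomPMF
  have h : (0:ℝ) ≤ 1 - p := by linarith
  positivity

lemma binomPMF_sum (n : ℕ) (p : ℝ) :
    ∑ s ∈ Finset.range (n+1), binomPMF n p s = 1 := by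
  have h := add_pow p (1 - p) n
  simp only [add_sub_cancel, one_pow] at h
  calc ∑ s ∈ Finset.range (n+1), binomPMF n p s
      = ∑ s ∈ Finset.range (n+1), p^s * (1-p)^(n-s) * (n.choose s : ℝ) :=
        Finset.sum_congr rfl (fun s _ => by unfold binomPMF; ring)
    _ = 1 := h.symm

lemma choose_ineq_up {n s k : ℕ} (hs : s + 1 ≤ k) (hk : k ≤ n) :
    n.choose s * (n - k) ≤ n.choose (s+1) * k := by
  have h := Nat.choose_succ_right_eq n s
  have h2 : n.choose s * (n - k) * (s+1) ≤ n.choose (s+1) * k * (s+1) := by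
    calc n.choose s * (n-k) * (s+1) = n.choose s * ((n-k) * (s+1)) := by ring
      _ ≤ n.choose s * ((n-s) * k) := by
          exact Nat.mul_le_mul_left _ (Nat.mul_le_mul (Nat.sub_le_sub_left (by omega) n) hs)
      _ = n.choose s * (n-s) * k := by ring
      _ = n.choose (s+1) * (s+1) * k := by rw [h]
      _ = n.choose (s+1) * k * (s+1) := by ring
  exact Nat.le_of_mul_le_mul_right h2 (Nat.succ_pos s)

lemma choose_ineq_down {n s k : ℕ} (hks : k ≤ s) (hsn : s + 1 ≤ n) :
    n.choose (s+1) * k ≤ n.choose s * (n - k) := by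
  have h := Nat.choose_succ_right_eq n s
  have h2 : n.choose (s+1) * k * (s+1) ≤ n.choose s * (n - k) * (s+1) := by
    calc n.choose (s+1) * k * (s+1) = n.choose (s+1) * (s+1) * k := by ring
      _ = n.choose s * (n-s) * k := by rw [h]
      _ = n.choose s * ((n-s) * k) := by ring
      _ ≤ n.choose s * ((n-k) * (s+1)) := by
          exact Nat.mul_le_mul_left _ (Nat.mul_le_mul (Nat.sub_le_sub_left hks n) (by omega))
      _ = n.choose s * (n-k) * (s+1) := by ring
  exact Nat.le_of_mul_le_mul_right h2 (Nat.succ_pos s)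

lemma step_up {n k s : ℕ} (hn : 0 < n) (hk : k ≤ n) (hs : s + 1 ≤ k) :
    binomPMF n ((k:ℝ)/n) s ≤ binomPMF n ((k:ℝ)/n) (s+1) := by
  unfold binomPMF
  have hn' : (0:ℝ) < n := by exact_mod_cast hn
  set p : ℝ := (k:ℝ)/n with hp
  have hp0 : 0 ≤ p := by positivity
  have hp1 : p ≤ 1 := by rw [hp, div_le_one hn']; exact_mod_cast hk
  have h1p : 1 - p = ((n:ℝ) - k)/n := by rw [hp]; field_simp
  have key : (n.choose s : ℝ) * (1-p) ≤ (n.choose (s+1):ℝ) * p := by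
    rw [h1p, hp, mul_div_assoc', mul_div_assoc', div_le_div_iff_of_pos_right hn']
    have hnat := choose_ineq_up hs hk
    have : ((n.choose s * (n - k) : ℕ) : ℝ) ≤ ((n.choose (s+1) * k : ℕ) : ℝ) := by
      exact_mod_cast hnat
    push_cast [Nat.cast_sub hk] at this
    linarith
  have hns : n - s = (n - (s+1)) + 1 := by omega
  rw [hns, pow_succ, pow_succ]
  have hnn : 0 ≤ p^s * (1-p)^(n-(s+1)) := by
    have : (0:ℝ) ≤ 1 - p := by linarith
    positivity
  calc (n.choose s:ℝ) * p^s * ((1-p)^(n-(s+1)) * (1-p))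
      = ((n.choose s:ℝ) * (1-p)) * (p^s * (1-p)^(n-(s+1))) := by ring
    _ ≤ ((n.choose (s+1):ℝ) * p) * (p^s * (1-p)^(n-(s+1))) :=
        mul_le_mul_of_nonneg_right key hnn
    _ = (n.choose (s+1):ℝ) * (p^s * p) * (1-p)^(n-(s+1)) := by ring

lemma step_down {n k s : ℕ} (hn : 0 < n) (hk : k ≤ n) (hks : k ≤ s) :
    binomPMF n ((k:ℝ)/n) (s+1) ≤ binomPMF n ((k:ℝ)/n) s := by
  have hn' : (0:ℝ) < n := by exact_mod_cast hn
  have hp0 : 0 ≤ (k:ℝ)/n := by positivity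
  have hp1 : (k:ℝ)/n ≤ 1 := by rw [div_le_one hn']; exact_mod_cast hk
  rcases le_or_gt (s+1) n with hsn | hsn
  · unfold binomPMF
    set p : ℝ := (k:ℝ)/n with hp
    have h1p : 1 - p = ((n:ℝ) - k)/n := by rw [hp]; field_simp
    have key : (n.choose (s+1):ℝ) * p ≤ (n.choose s : ℝ) * (1-p) := by
      rw [h1p, hp, mul_div_assoc', mul_div_assoc', div_le_div_iff_of_pos_right hn']
      have hnat := choose_ineq_down hks hsn
      have : ((n.choose (s+1) * k : ℕ) : ℝ) ≤ ((n.choose s * (n - k) : ℕ) : ℝ) := by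
        exact_mod_cast hnat
      push_cast [Nat.cast_sub hk] at this
      linarith
    have hns : n - s = (n - (s+1)) + 1 := by omega
    rw [hns, pow_succ, pow_succ]
    have hnn : 0 ≤ p^s * (1-p)^(n-(s+1)) := by
      have : (0:ℝ) ≤ 1 - p := by linarith
      positivity
    calc (n.choose (s+1):ℝ) * (p^s * p) * (1-p)^(n-(s+1))
        = ((n.choose (s+1):ℝ) * p) * (p^s * (1-p)^(n-(s+1))) := by ring
      _ ≤ ((n.choose s:ℝ) * (1-p)) * (p^s * (1-p)^(n-(s+1))) :=
          mul_le_mul_of_nonneg_right key hnn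
      _ = (n.choose s:ℝ) * p^s * ((1-p)^(n-(s+1)) * (1-p)) := by ring
  · have : n.choose (s+1) = 0 := Nat.choose_eq_zero_of_lt hsn
    unfold binomPMF
    rw [this]
    simp only [Nat.cast_zero, zero_mul]
    have h1p : (0:ℝ) ≤ 1 - (k:ℝ)/n := by linarith
    positivity

lemma binomPMF_le_mode {n k : ℕ} (hn : 0 < n) (hk : k ≤ n) (s : ℕ) :
    binomPMF n ((k:ℝ)/n) s ≤ binomPMF n ((k:ℝ)/n) k := by
  rcases le_or_gt s k with hs | hs
  · have aux : ∀ d s', s' + d = k → binomPMF n ((k:ℝ)/n) s' ≤ binomPMF n ((k:ℝ)/n) k := by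
      intro d
      induction d with
      | zero => intro s' h; simp only [Nat.add_zero] at h; subst h; exact le_refl _
      | succ d ih =>
          intro s' h
          exact le_trans (step_up hn hk (by omega)) (ih (s'+1) (by omega))
    exact aux (k - s) s (by omega)
  · have aux : ∀ d, binomPMF n ((k:ℝ)/n) (k + d) ≤ binomPMF n ((k:ℝ)/n) k := by
      intro d
      induction d with
      | zero => exact le_refl _
      | succ d ih => exact le_trans (step_down (s := k + d) hn hk (by omega)) ih
    have := aux (s - k)
    rwa [show k + (s - k) = s by omega] at this

lemma one_div_le_mode {n k : ℕ} (hn : 0 < n) (hk : k ≤ n) :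
    1 / ((n:ℝ) + 1) ≤ binomPMF n ((k:ℝ)/n) k := by
  have hsum := binomPMF_sum n ((k:ℝ)/n)
  have hle : (1:ℝ) ≤ ((n:ℝ)+1) * binomPMF n ((k:ℝ)/n) k := by
    calc (1:ℝ) = ∑ s ∈ Finset.range (n+1), binomPMF n ((k:ℝ)/n) s := hsum.symm
      _
        ≤ ∑ s ∈ Finset.range (n+1), binomPMF n ((k:ℝ)/n) k :=
          Finset.sum_le_sum (fun s _ => binomPMF_le_mode hn hk s)
      _ = ((n:ℝ)+1) * binomPMF n ((k:ℝ)/n) k := by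
          rw [Finset.sum_const, Finset.card_range]; push_cast; ring
  have hpos : (0:ℝ) < (n:ℝ) + 1 := by positivity
  rw [div_le_iff₀ hpos]
  linarith

/-- Sanov inequalities for the lower tail of a Binomial(n,x) random variable:
for an integer k with 0 ≤ k < x·n,
e^{-n·kl(k/n,x)}/(n+1) ≤ P(S ≤ k) ≤ e^{-n·kl(k/n,x)}. -/
theorem sanov_binomial_lower_tail (n k : ℕ) (x : ℝ) (hx0 : 0 < x) (hx1 : x < 1)
    (hk : (k : ℝ) < x * n) :
    Real.exp (-(n : ℝ) * kl ((k : ℝ) / n) x) / ((n : ℝ) + 1) ≤ binomCDF n x k ∧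
    binomCDF n x k ≤ Real.exp (-(n : ℝ) * kl ((k : ℝ) / n) x) := by
  have hn : 0 < n := by
    rcases Nat.eq_zero_or_pos n with h | h
    · subst h; simp at hk; nlinarith [Nat.cast_nonneg (α := ℝ) k]
    · exact h
  have hn' : (0:ℝ) < n := by exact_mod_cast hn
  have hkn : k < n := by
    have : (k:ℝ) < n := by nlinarith
    exact_mod_cast this
  have hkn' : k ≤ n := hkn.le
  have h1x : (0:ℝ) < 1 - x := by linarith
  set p : ℝ := (k:ℝ)/n with hpdef
  have hp0 : 0 ≤ p := by positivity
  have hp1 : p < 1 := by rw [hpdef, div_lt_one hn']; exact_mod_cast hkn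
  have hpx : p < x := by rw [hpdef, div_lt_iff₀ hn']; linarith
  have h1p : (0:ℝ) < 1 - p := by linarith
  -- the exponential identity
  have hnp : (n:ℝ) * p = k := by rw [hpdef]; field_simp
  have hn1p : (n:ℝ) * (1 - p) = ((n - k : ℕ) : ℝ) := by
    push_cast [Nat.cast_sub hkn'] ; rw [hpdef]; field_simp
  have hE : Real.exp (-(n : ℝ) * kl p x)
      = (x/p)^k * ((1-x)/(1-p))^(n-k) := by
    have hlog1 : Real.log (x/p) = - Real.log (p/x) := by
      rw [← Real.log_inv, inv_div]
    have harg : -(n : ℝ) * kl p x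
        = (k:ℝ) * Real.log (x/p) + ((n-k:ℕ):ℝ) * Real.log ((1-x)/(1-p)) := by
      unfold kl
      rw [hlog1, show Real.log ((1-x)/(1-p)) = - Real.log ((1-p)/(1-x)) by
        rw [← Real.log_inv, inv_div]]
      rw [← hnp, ← hn1p]
      ring
    rw [harg, Real.exp_add, Real.exp_nat_mul, Real.exp_nat_mul]
    rcases Nat.eq_zero_or_pos k with hk0 | hk0
    · subst hk0
      simp only [pow_zero, one_mul]
      rw [Real.exp_log (by positivity)]
    · have hpp : 0 < p := by
        rw [hpdef]
        have : (0:ℝ) < k := by exact_mod_cast hk0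
        positivity
      rw [Real.exp_log (by positivity), Real.exp_log (by positivity)]
  rcases Nat.eq_zero_or_pos k with hk0 | hk0
  · subst hk0
    have hp00 : p = 0 := by rw [hpdef]; simp
    have hEval : Real.exp (-(n:ℝ) * kl p x) = (1-x)^n := by
      rw [hE, hp00]; simp
    have hCDF : binomCDF n x 0 = (1-x)^n := by
      unfold binomCDF binomPMF; simp
    constructor
    · rw [hEval, hCDF]
      apply div_le_self (by positivity) (by linarith)
    · rw [hEval, hCDF]
  · have hpp : 0 < p := by
      rw [hpdef]
      have : (0:ℝ) < k := by exact_mod_cast hk0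
      positivity
    have hxp1 : (0:ℝ) < x/p := by positivity
    have hb0 : (0:ℝ) ≤ (1-x)/(1-p) := by positivity
    have hba : (1-x)/(1-p) ≤ x/p := by
      have ha1 : (1-x)/(1-p) ≤ 1 := by rw [div_le_one h1p]; linarith
      have ha2 : (1:ℝ) ≤ x/p := by rw [le_div_iff₀ hpp]; linarith
      linarith
    have hident : ∀ s : ℕ, binomPMF n x s = binomPMF n p s * ((x/p)^s * ((1-x)/(1-p))^(n-s)) := by
      intro s
      have h1 : (x/p)^s * p^s = x^s := by
        rw [← mul_pow, div_mul_cancel₀ _ hpp.ne']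
      have h2 : ((1-x)/(1-p))^(n-s) * (1-p)^(n-s) = (1-x)^(n-s) := by
        rw [← mul_pow, div_mul_cancel₀ _ h1p.ne']
      unfold binomPMF
      calc (n.choose s : ℝ) * x^s * (1-x)^(n-s)
          = (n.choose s : ℝ) * ((x/p)^s * p^s) * (((1-x)/(1-p))^(n-s) * (1-p)^(n-s)) := by
            rw [h1, h2]
        _ = (n.choose s : ℝ) * p^s * (1-p)^(n-s) * ((x/p)^s * ((1-x)/(1-p))^(n-s)) := by ring
    have hmono : ∀ s, s ≤ k → (x/p)^s * ((1-x)/(1-p))^(n-s) ≤ (x/p)^k * ((1-x)/(1-p))^(n-k) := by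
      intro s hs
      have e1 : (x/p)^k = (x/p)^s * (x/p)^(k-s) := by rw [← pow_add]; congr 1; omega
      have e2 : ((1-x)/(1-p))^(n-s) = ((1-x)/(1-p))^(n-k) * ((1-x)/(1-p))^(k-s) := by
        rw [← pow_add]; congr 1; omega
      rw [e1, e2]
      have hpow : ((1-x)/(1-p))^(k-s) ≤ (x/p)^(k-s) := pow_le_pow_left₀ hb0 hba _
      calc (x/p)^s * (((1-x)/(1-p))^(n-k) * ((1-x)/(1-p))^(k-s))
          ≤ (x/p)^s * (((1-x)/(1-p))^(n-k) * (x/p)^(k-s)) := by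
            apply mul_le_mul_of_nonneg_left
              (mul_le_mul_of_nonneg_left hpow (by positivity)) (by positivity)
        _ = (x/p)^s * (x/p)^(k-s) * ((1-x)/(1-p))^(n-k) := by ring
    constructor
    · -- lower bound
      have h1 : binomPMF n x k ≤ binomCDF n x k := by
        unfold binomCDF
        exact Finset.single_le_sum (fun s _ => binomPMF_nonneg hx0.le hx1.le s)
          (Finset.self_mem_range_succ k)
      have h2 : binomPMF n x k = binomPMF n p k * Real.exp (-(n:ℝ)*kl p x) := by
        rw [hE, hident k]
      have h3 := one_div_le_mode hn hkn'
      rw [← hpdef] at h3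
      calc Real.exp (-(n:ℝ)*kl p x) / ((n:ℝ)+1)
          = (1/((n:ℝ)+1)) * Real.exp (-(n:ℝ)*kl p x) := by ring
        _ ≤ binomPMF n p k * Real.exp (-(n:ℝ)*kl p x) :=
            mul_le_mul_of_nonneg_right h3 (Real.exp_pos _).le
        _ = binomPMF n x k := h2.symm
        _ ≤ binomCDF n x k := h1
    · -- upper bound
      unfold binomCDF
      have hsub : Finset.range (k+1) ⊆ Finset.range (n+1) := Finset.range_subset_range.mpr (by omega)
      calc ∑ s ∈ Finset.range (k+1), binomPMF n x s
          ≤ ∑ s ∈ Finset.range (k+1), binomPMF n p s * Real.exp (-(n:ℝ)*kl p x) := by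
            apply Finset.sum_le_sum
            intro s hs
            rw [hident s, hE]
            exact mul_le_mul_of_nonneg_left
              (hmono s (by simpa [Nat.lt_succ_iff] using hs))
              (binomPMF_nonneg hp0 hp1.le s)
        _ = (∑ s ∈ Finset.range (k+1), binomPMF n p s) * Real.exp (-(n:ℝ)*kl p x) := by
            rw [← Finset.sum_mul]
        _ ≤ 1 * Real.exp (-(n:ℝ)*kl p x) := by
            apply mul_le_mul_of_nonneg_right _ (Real.exp_pos _).le
            calc ∑ s ∈ Finset.range (k+1), binomPMF n p s
                ≤ ∑ s ∈ Finset.range (n+1), binomPMF n p s :=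
                  Finset.sum_le_sum_of_subset_of_nonneg hsub
                    (fun i _ _ => binomPMF_nonneg hp0 hp1.le i)
              _ = 1 := binomPMF_sum n p
        _ = Real.exp (-(n:ℝ)*kl p x) := one_mul _
end

section
/- Let 0 < y < y' < 1 with kl(y,y') ≥ log(2(j+2))/(j+1). Then for every integer s with s ≤ (j+1)y, it holds that P(S_{j+1,y'} ≤ s) ≤ (1/2) P(S_{j+1,y} ≤ s), where S_{n,x} denotes a Binomial(n,x) random variable. -/
set_option maxHeartbeats 800000 in
/-- if 0 < y < y' < 1 with kl(y,y') ≥ log(2(j+2))/(j+1), then for every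
integer s with s ≤ (j+1)y, P(S_{j+1,y'} ≤ s) ≤ (1/2) P(S_{j+1,y} ≤ s). -/
theorem binomial_cdf_domination (j s : ℕ) (y y' : ℝ) (hy0 : 0 < y) (hyy : y < y')
    (hy1 : y' < 1) (hkl : Real.log (2 * ((j : ℝ) + 2)) / ((j : ℝ) + 1) ≤ kl y y')
    (hs : (s : ℝ) ≤ ((j : ℝ) + 1) * y) :
    binomCDF (j + 1) y' s ≤ (1 / 2) * binomCDF (j + 1) y s := by
  have hy'0 : 0 < y' := hy0.trans hyy
  have hy1' : y < 1 := hyy.trans hy1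
  have h1y : 0 < 1 - y := by linarith
  have h1y' : 0 < 1 - y' := by linarith
  have hsn : s ≤ j := by
    by_contra h
    push_neg at h
    have h2 : (j : ℝ) + 1 ≤ (s : ℝ) := by exact_mod_cast h
    nlinarith
  set R : ℝ := (y' / y) ^ s * ((1 - y') / (1 - y)) ^ (j + 1 - s) with hRdef
  have hRpos : 0 < R := by positivity
  -- R ≤ 1/2
  have hL1 : Real.log (y' / y) = Real.log y' - Real.log y :=
    Real.log_div (ne_of_gt hy'0) (ne_of_gt hy0)
  have hL2 : Real.log ((1 - y') / (1 - y)) = Real.log (1 - y') - Real.log (1 - y) :=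
    Real.log_div (ne_of_gt h1y') (ne_of_gt h1y)
  have hL1pos : 0 < Real.log (y' / y) := Real.log_pos (by rw [lt_div_iff₀ hy0]; linarith)
  have hL2neg : Real.log ((1 - y') / (1 - y)) < 0 :=
    Real.log_neg (by positivity) (by rw [div_lt_one h1y]; linarith)
  have hcast : ((j + 1 - s : ℕ) : ℝ) = (j : ℝ) + 1 - s := by
    have : s ≤ j + 1 := hsn.trans (Nat.le_succ j)
    push_cast [Nat.cast_sub this]
    ring
  have hlogR : Real.log R = (s : ℝ) * Real.log (y' / y)
      + ((j : ℝ) + 1 - s) * Real.log ((1 - y') / (1 - y)) := by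
    rw [hRdef, Real.log_mul (by positivity) (by positivity), Real.log_pow, Real.log_pow, hcast]
  have hA : (s : ℝ) * Real.log (y' / y) ≤ (((j : ℝ) + 1) * y) * Real.log (y' / y) :=
    mul_le_mul_of_nonneg_right hs hL1pos.le
  have hB : ((j : ℝ) + 1 - s) * Real.log ((1 - y') / (1 - y))
      ≤ (((j : ℝ) + 1) * (1 - y)) * Real.log ((1 - y') / (1 - y)) := by
    apply mul_le_mul_of_nonpos_right _ hL2neg.le
    nlinarith
  have hkl' : (((j : ℝ) + 1) * y) * Real.log (y' / y)
      + (((j : ℝ) + 1) * (1 - y)) * Real.log ((1 - y') / (1 - y))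
      = -(((j : ℝ) + 1) * kl y y') := by
    unfold kl
    rw [hL1, hL2, Real.log_div (ne_of_gt hy0) (ne_of_gt hy'0),
      Real.log_div (ne_of_gt h1y) (ne_of_gt h1y')]
    ring
  have hj1 : (0 : ℝ) < (j : ℝ) + 1 := by positivity
  have hklbd : Real.log 2 ≤ ((j : ℝ) + 1) * kl y y' := by
    have h2 : Real.log 2 ≤ Real.log (2 * ((j : ℝ) + 2)) := by
      apply Real.log_le_log (by norm_num)
      nlinarith [Nat.cast_nonneg (α := ℝ) j]
    have h3 : Real.log (2 * ((j : ℝ) + 2)) ≤ ((j : ℝ) + 1) * kl y y' := by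
      rw [div_le_iff₀ hj1] at hkl
      linarith [hkl]
    linarith
  have hRhalf : R ≤ 1 / 2 := by
    have hlog : Real.log R ≤ Real.log (1 / 2) := by
      have hhalf : Real.log (1 / 2 : ℝ) = -Real.log 2 := by rw [one_div, Real.log_inv]
      rw [hlogR, hhalf]
      nlinarith [hA, hB, hkl', hklbd]
    have := Real.exp_le_exp.mpr hlog
    rwa [Real.exp_log hRpos, Real.exp_log (by norm_num)] at this
  -- termwise bound
  have hterm : ∀ t ∈ Finset.range (s + 1), binomPMF (j + 1) y' t ≤ R * binomPMF (j + 1) y t := by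
    intro t ht
    rw [Finset.mem_range, Nat.lt_succ_iff] at ht
    have htn : t ≤ j + 1 := ht.trans (hsn.trans (Nat.le_succ j))
    have hratio : binomPMF (j + 1) y' t
        = binomPMF (j + 1) y t * ((y' / y) ^ t * ((1 - y') / (1 - y)) ^ (j + 1 - t)) := by
      unfold binomPMF
      rw [div_pow, div_pow]
      field_simp
    rw [hratio]
    have hmono : (y' / y) ^ t * ((1 - y') / (1 - y)) ^ (j + 1 - t) ≤ R := by
      have hst : j + 1 - t = (j + 1 - s) + (s - t) := by omega
      have e2' : (y' / y) ^ s = (y' / y) ^ t * (y' / y) ^ (s - t) := by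
        rw [← pow_add]; congr 1; omega
      have hbase : (1 - y') / (1 - y) ≤ y' / y := by
        rw [div_le_div_iff₀ h1y hy0]
        nlinarith
      have hbnn : (0 : ℝ) ≤ (1 - y') / (1 - y) := by positivity
      have hba : ((1 - y') / (1 - y)) ^ (s - t) ≤ (y' / y) ^ (s - t) :=
        pow_le_pow_left₀ hbnn hbase (s - t)
      have h0 : 0 ≤ (y' / y) ^ t * ((1 - y') / (1 - y)) ^ (j + 1 - s) := by positivity
      calc (y' / y) ^ t * ((1 - y') / (1 - y)) ^ (j + 1 - t)
          = ((y' / y) ^ t * ((1 - y') / (1 - y)) ^ (j + 1 - s))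
            * ((1 - y') / (1 - y)) ^ (s - t) := by rw [hst, pow_add]; ring
        _ ≤ ((y' / y) ^ t * ((1 - y') / (1 - y)) ^ (j + 1 - s)) * (y' / y) ^ (s - t) :=
            mul_le_mul_of_nonneg_left hba h0
        _ = R := by rw [hRdef, e2']; ring
    have hpmf : 0 ≤ binomPMF (j + 1) y t := by
      unfold binomPMF; positivity
    calc binomPMF (j + 1) y t * ((y' / y) ^ t * ((1 - y') / (1 - y)) ^ (j + 1 - t))
        ≤ binomPMF (j + 1) y t * R := mul_le_mul_of_nonneg_left hmono hpmf
      _ = R * binomPMF (j + 1) y t := mul_comm _ _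
  have hsum : binomCDF (j + 1) y' s ≤ R * binomCDF (j + 1) y s := by
    unfold binomCDF
    rw [Finset.mul_sum]
    exact Finset.sum_le_sum hterm
  have hcdf : 0 ≤ binomCDF (j + 1) y s := by
    unfold binomCDF
    apply Finset.sum_nonneg
    intro t _
    unfold binomPMF; positivity
  calc binomCDF (j + 1) y' s ≤ R * binomCDF (j + 1) y s := hsum
    _ ≤ (1 / 2) * binomCDF (j + 1) y s := mul_le_mul_of_nonneg_right hRhalf hcdf
end

section
/- Let 0 < y < y' < 1 and let y_mid = (y+y')/2. If j+1 ≥ (ln 4)/kl(y_mid, y'), then for every integer s with (j+1)y ≤ s ≤ (j+1)y_mid, we have P(S_{j+1,y'} ≤ s) ≤ 1/4 ≤ (1/2) P(S_{j+1,y} ≤ s), and hence P(S_{j+1,y} ≤ s) - P(S_{j+1,y'} ≤ s) ≥ (1/2) P(S_{j+1,y} ≤ s). -/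
lemma binomPMF_nonneg_s6 {n : ℕ} {x : ℝ} (h0 : 0 ≤ x) (h1 : x ≤ 1) (s : ℕ) :
    0 ≤ binomPMF n x s := by
  unfold binomPMF
  have : (0:ℝ) ≤ 1 - x := by linarith
  positivity

lemma sum_binomPMF (n : ℕ) (x : ℝ) :
    ∑ s ∈ Finset.range (n + 1), binomPMF n x s = 1 := by
  have h := add_pow x (1-x) n
  simp only [add_sub_cancel, one_pow] at h
  rw [h]
  unfold binomPMF
  exact Finset.sum_congr rfl fun k _ => by ring

lemma binomCDF_nonneg {n : ℕ} {x : ℝ} (h0 : 0 ≤ x) (h1 : x ≤ 1) (k : ℕ) :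
    0 ≤ binomCDF n x k :=
  Finset.sum_nonneg fun s _ => binomPMF_nonneg_s6 h0 h1 s


lemma choose_key (m u : ℕ) (hum : u ≤ m + 1) :
    ∀ i, i < u →
      m ^ (2 * i + 1) * (m + u).choose (u - 1 - i) ≤ u ^ (2 * i + 1) * (m + u).choose (u + i) := by
  intro i
  induction i with
  | zero =>
    intro hi
    have hu0 : 0 < u := hi
    have hId := Nat.choose_succ_right_eq (m + u) (u - 1)
    have e1 : u - 1 + 1 = u := by omega
    have e2 : m + u - (u - 1) = m + 1 := by omega
    rw [e1, e2] at hId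
    simp only [Nat.mul_zero, Nat.zero_add, pow_one, Nat.sub_zero, Nat.add_zero]
    refine Nat.le_of_mul_le_mul_right ?_ hu0
    calc m * (m + u).choose (u - 1) * u
        ≤ ((m + u).choose (u - 1) * (m + 1)) * u := by
          refine Nat.mul_le_mul_right u ?_
          calc m * (m + u).choose (u - 1) ≤ (m + 1) * (m + u).choose (u - 1) :=
                Nat.mul_le_mul_right _ (Nat.le_succ m)
            _ = (m + u).choose (u - 1) * (m + 1) := Nat.mul_comm _ _
      _ = ((m + u).choose u * u) * u := by rw [hId]
      _ = u * (m + u).choose u * u := by ring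
  | succ i ih =>
    intro hi
    have IH := ih (by omega)
    have hiu : i + 1 < u := hi
    have him : i < m := by omega
    have hId1 := Nat.choose_succ_right_eq (m + u) (u - 2 - i)
    have e1 : u - 2 - i + 1 = u - 1 - i := by omega
    have e2 : m + u - (u - 2 - i) = m + i + 2 := by omega
    rw [e1, e2] at hId1
    have hId2 := Nat.choose_succ_right_eq (m + u) (u + i)
    have e3 : m + u - (u + i) = m - i := by omega
    rw [e3] at hId2
    have star : m ^ 2 * ((u - 1 - i) * (u + i + 1)) ≤ u ^ 2 * ((m - i) * (m + i + 2)) := by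
      obtain ⟨c, hc⟩ : ∃ c, u = c + i + 2 := ⟨u - i - 2, by omega⟩
      obtain ⟨d, hd⟩ : ∃ d, m = d + i + 1 := ⟨m - i - 1, by omega⟩
      have hcd : c ≤ d := by omega
      subst hc hd
      have e4 : c + i + 2 - 1 - i = c + 1 := by omega
      have e5 : d + i + 1 - i = d + 1 := by omega
      rw [e4, e5]
      rcases Nat.eq_or_lt_of_le hcd with h | h
      · subst h
        have e6 : c + i + 1 + i + 2 = c + i + 2 + i + 1 := by omega
        rw [e6]
        exact Nat.mul_le_mul_right _ (Nat.pow_le_pow_left (by omega) 2)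
      · have h2 : c + i + 2 ≤ d + i + 1 := by omega
        have h3 : (i+1)^2*(c+i+2)^2 ≤ (i+1)^2*(d+i+1)^2 :=
          Nat.mul_le_mul_left _ (Nat.pow_le_pow_left h2 2)
        nlinarith [h3, sq_nonneg (c+i+2)]
    refine Nat.le_of_mul_le_mul_right ?_ (show 0 < (m + i + 2) * (u + i + 1) by positivity)
    have goal_eq : u - 1 - (i + 1) = u - 2 - i := by omega
    rw [goal_eq]
    calc m ^ (2 * (i + 1) + 1) * (m + u).choose (u - 2 - i) * ((m + i + 2) * (u + i + 1))
        = m ^ (2 * i + 1) * m ^ 2 * ((m + u).choose (u - 2 - i) * (m + i + 2)) * (u + i + 1) := by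
          ring
      _ = m ^ (2 * i + 1) * m ^ 2 * ((m + u).choose (u - 1 - i) * (u - 1 - i)) * (u + i + 1) := by
          rw [hId1]
      _ = (m ^ (2 * i + 1) * (m + u).choose (u - 1 - i)) * (m ^ 2 * ((u - 1 - i) * (u + i + 1))) := by
          ring
      _ ≤ (u ^ (2 * i + 1) * (m + u).choose (u + i)) * (u ^ 2 * ((m - i) * (m + i + 2))) :=
          Nat.mul_le_mul IH star
      _ = u ^ (2 * i + 1) * u ^ 2 * ((m + u).choose (u + i) * (m - i)) * (m + i + 2) := by
          ring
      _ = u ^ (2 * i + 1) * u ^ 2 * ((m + u).choose (u + i + 1) * (u + i + 1)) * (m + i + 2) := by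
          rw [hId2]
      _ = u ^ (2 * (i + 1) + 1) * (m + u).choose (u + (i + 1)) * ((m + i + 2) * (u + i + 1)) := by
          ring

lemma pmf_tilt (n k : ℕ) {a : ℝ} (p : ℝ) (ha0 : 0 < a) (ha1 : a < 1) :
    binomPMF n p k = binomPMF n a k * ((p / a) ^ k * ((1 - p) / (1 - a)) ^ (n - k)) := by
  unfold binomPMF
  rw [div_pow, div_pow]
  have h1 : a ^ k ≠ 0 := by positivity
  have h2 : (1 - a) ^ (n - k) ≠ 0 := by
    apply pow_ne_zero; intro h; nlinarith
  field_simp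

lemma chernoff {n s : ℕ} {p : ℝ} (hs : 1 ≤ s) (hsn : s < n) (hp1 : p < 1)
    (hsp : (s : ℝ) ≤ n * p) :
    binomCDF n p s ≤ Real.exp (-(n : ℝ) * kl ((s : ℝ) / n) p) := by
  have hn : 0 < n := by omega
  have hn0 : (0:ℝ) < n := by exact_mod_cast hn
  obtain ⟨a, ha_def⟩ : ∃ a : ℝ, a = (s : ℝ) / n := ⟨_, rfl⟩
  rw [← ha_def]
  have ha0 : 0 < a := by
    rw [ha_def]
    have : (0:ℝ) < s := by exact_mod_cast hs
    positivity
  have hap : a ≤ p := by rw [ha_def]; exact (div_le_iff₀ hn0).2 (by linarith [hsp])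
  have hp0 : 0 < p := lt_of_lt_of_le ha0 hap
  have ha1 : a < 1 := by
    rw [ha_def, div_lt_one hn0]; exact_mod_cast hsn
  have hB0 : (0:ℝ) ≤ (1 - p) / (1 - a) := by
    apply div_nonneg <;> linarith
  have hB1 : (1 - p) / (1 - a) ≤ 1 := by
    rw [div_le_one (by linarith)]; linarith
  have hr1 : (1:ℝ) ≤ p / a := (one_le_div ha0).2 hap
  have key : ∀ k ∈ Finset.range (s + 1),
      binomPMF n p k ≤ binomPMF n a k * ((p / a) ^ s * ((1 - p) / (1 - a)) ^ (n - s)) := by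
    intro k hk
    rw [Finset.mem_range] at hk
    have hks : k ≤ s := Nat.lt_succ_iff.1 hk
    rw [pmf_tilt n k p ha0 ha1]
    apply mul_le_mul_of_nonneg_left _ (binomPMF_nonneg_s6 (le_of_lt ha0) (le_of_lt ha1) k)
    obtain ⟨d, rfl⟩ := Nat.exists_eq_add_of_le hks
    have hnk : n - k = (n - (k + d)) + d := by omega
    rw [hnk, pow_add, pow_add]
    have h1 : ((1 - p) / (1 - a)) ^ d ≤ (p / a) ^ d := by
      calc ((1 - p) / (1 - a)) ^ d ≤ 1 ^ d := pow_le_pow_left₀ hB0 hB1 d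
        _ = 1 := one_pow d
        _ ≤ (p / a) ^ d := one_le_pow₀ hr1
    calc (p / a) ^ k * (((1 - p) / (1 - a)) ^ (n - (k + d)) * ((1 - p) / (1 - a)) ^ d)
        ≤ (p / a) ^ k * (((1 - p) / (1 - a)) ^ (n - (k + d)) * (p / a) ^ d) := by
          apply mul_le_mul_of_nonneg_left _ (by positivity)
          exact mul_le_mul_of_nonneg_left h1 (by positivity)
      _ = (p / a) ^ k * (p / a) ^ d * ((1 - p) / (1 - a)) ^ (n - (k + d)) := by ring
  have hsum : binomCDF n p s ≤ (p / a) ^ s * ((1 - p) / (1 - a)) ^ (n - s) := by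
    calc binomCDF n p s
        ≤ ∑ k ∈ Finset.range (s + 1),
            binomPMF n a k * ((p / a) ^ s * ((1 - p) / (1 - a)) ^ (n - s)) :=
          Finset.sum_le_sum key
      _ = (∑ k ∈ Finset.range (s + 1), binomPMF n a k)
            * ((p / a) ^ s * ((1 - p) / (1 - a)) ^ (n - s)) := by rw [Finset.sum_mul]
      _ ≤ 1 * ((p / a) ^ s * ((1 - p) / (1 - a)) ^ (n - s)) := by
          apply mul_le_mul_of_nonneg_right _ (by positivity)
          rw [← sum_binomPMF n a]
          apply Finset.sum_le_sum_of_subset_of_nonneg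
          · exact Finset.range_subset_range.2 (by omega)
          · intro k _ _; exact binomPMF_nonneg_s6 (le_of_lt ha0) (le_of_lt ha1) k
      _ = _ := one_mul _
  have hρ : (p / a) ^ s * ((1 - p) / (1 - a)) ^ (n - s) = Real.exp (-(n : ℝ) * kl a p) := by
    have hna : (n : ℝ) * a = s := by rw [ha_def]; field_simp
    have hna' : (n : ℝ) * (1 - a) = ((n - s : ℕ) : ℝ) := by
      rw [Nat.cast_sub (le_of_lt hsn), mul_sub, mul_one, hna]
    have hkl2 : (n : ℝ) * kl a p
        = (s : ℝ) * Real.log (a / p) + ((n - s : ℕ) : ℝ) * Real.log ((1 - a) / (1 - p)) := by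
      unfold kl
      rw [mul_add, ← mul_assoc, ← mul_assoc, hna, hna']
    have hkl : -(n : ℝ) * kl a p
        = (s : ℝ) * Real.log (p / a) + ((n - s : ℕ) : ℝ) * Real.log ((1 - p) / (1 - a)) := by
      rw [neg_mul, hkl2,
          Real.log_div (ne_of_gt ha0) (ne_of_gt hp0), Real.log_div (by linarith) (by linarith),
          Real.log_div (ne_of_gt hp0) (ne_of_gt ha0), Real.log_div (by linarith) (by linarith)]
      ring
    rw [hkl, Real.exp_add, Real.exp_nat_mul, Real.exp_nat_mul,
        Real.exp_log (by positivity), Real.exp_log (by apply div_pos <;> linarith)]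
  rw [← hρ]; exact hsum

noncomputable def klg (p : ℝ) : ℝ → ℝ := fun x =>
  x * Real.log x - x * Real.log p + (1 - x) * Real.log (1 - x) - (1 - x) * Real.log (1 - p)

lemma kl_eq_klg {p x : ℝ} (hx0 : 0 < x) (hx1 : x < 1) (hp0 : 0 < p) (hp1 : p < 1) :
    kl x p = klg p x := by
  unfold kl klg
  rw [Real.log_div (ne_of_gt hx0) (ne_of_gt hp0),
      Real.log_div (by linarith) (by linarith)]
  ring

lemma hasDerivAt_klg (p : ℝ) {x : ℝ} (hx0 : 0 < x) (hx1 : x < 1) :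
    HasDerivAt (klg p) (Real.log x - Real.log (1 - x) - Real.log p + Real.log (1 - p)) x := by
  have h1 : HasDerivAt (fun x : ℝ => x * Real.log x) (Real.log x + 1) x := by
    have := (hasDerivAt_id x).mul (Real.hasDerivAt_log (ne_of_gt hx0))
    refine this.congr_deriv ?_
    simp [hx0.ne']
  have h2 : HasDerivAt (fun x : ℝ => x * Real.log p) (Real.log p) x := by
    simpa using (hasDerivAt_id x).mul_const (Real.log p)
  have h3 : HasDerivAt (fun x : ℝ => (1 - x) * Real.log (1 - x))
      (-(Real.log (1 - x) + 1)) x := by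
    have hu : HasDerivAt (fun x : ℝ => 1 - x) (-1) x := by
      exact ((hasDerivAt_const x (1:ℝ)).sub (hasDerivAt_id x)).congr_deriv (zero_sub _)
    have hcomp : HasDerivAt (fun u : ℝ => u * Real.log u) (Real.log (1 - x) + 1) (1 - x) := by
      have := (hasDerivAt_id (1 - x)).mul (Real.hasDerivAt_log (by intro h; linarith : (1:ℝ) - x ≠ 0))
      refine this.congr_deriv ?_
      field_simp
      rw [id_eq, div_self (by intro h; linarith : (1:ℝ) - x ≠ 0)]
    have := hcomp.comp x hu
    refine this.congr_deriv ?_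
    ring
  have h4 : HasDerivAt (fun x : ℝ => (1 - x) * Real.log (1 - p)) (-Real.log (1 - p)) x := by
    have hu : HasDerivAt (fun x : ℝ => 1 - x) (-1) x := by
      exact ((hasDerivAt_const x (1:ℝ)).sub (hasDerivAt_id x)).congr_deriv (zero_sub _)
    have := hu.mul_const (Real.log (1 - p))
    refine this.congr_deriv ?_
    ring
  have := ((h1.sub h2).add h3).sub h4
  refine this.congr_deriv ?_
  ring

lemma kl_anti {p a b : ℝ} (hp1 : p < 1) (ha : 0 < a) (hab : a ≤ b) (hbp : b ≤ p) :
    kl b p ≤ kl a p := by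
  have hp0 : 0 < p := lt_of_lt_of_le (lt_of_lt_of_le ha hab) hbp
  have hb1 : b < 1 := lt_of_le_of_lt hbp hp1
  have hmem : ∀ x ∈ Set.Icc a b, 0 < x ∧ x < 1 := by
    intro x hx
    exact ⟨lt_of_lt_of_le ha hx.1, lt_of_le_of_lt hx.2 hb1⟩
  have hanti : AntitoneOn (klg p) (Set.Icc a b) := by
    apply antitoneOn_of_deriv_nonpos (convex_Icc a b)
    · intro x hx
      obtain ⟨h0, h1⟩ := hmem x hx
      exact (hasDerivAt_klg p h0 h1).continuousAt.continuousWithinAt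
    · rw [interior_Icc]
      intro x hx
      obtain ⟨h0, h1⟩ := hmem x (Set.mem_Icc_of_Ioo hx)
      exact (hasDerivAt_klg p h0 h1).differentiableAt.differentiableWithinAt
    · rw [interior_Icc]
      intro x hx
      obtain ⟨h0, h1⟩ := hmem x (Set.mem_Icc_of_Ioo hx)
      rw [(hasDerivAt_klg p h0 h1).deriv]
      have hxp : x ≤ p := le_trans (le_of_lt hx.2) hbp
      have l1 : Real.log x ≤ Real.log p := Real.log_le_log h0 hxp
      have l2 : Real.log (1 - p) ≤ Real.log (1 - x) :=
        Real.log_le_log (by linarith) (by linarith)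
      linarith
  rw [kl_eq_klg (lt_of_lt_of_le ha hab) hb1 hp0 hp1, kl_eq_klg ha (by linarith) hp0 hp1]
  exact hanti (Set.left_mem_Icc.2 hab) (Set.right_mem_Icc.2 hab) hab

lemma kl_self (p : ℝ) (hp0 : 0 < p) (hp1 : p < 1) : kl p p = 0 := by
  unfold kl
  rw [div_self (ne_of_gt hp0), div_self (by linarith : (1:ℝ) - p ≠ 0), Real.log_one]
  ring

lemma kl_pos {p b : ℝ} (hp1 : p < 1) (hb : 0 < b) (hbp : b < p) : 0 < kl b p := by
  have hp0 : 0 < p := lt_trans hb hbp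
  have hb1 : b < 1 := lt_trans hbp hp1
  have hmem : ∀ x ∈ Set.Icc b p, 0 < x ∧ x < 1 := by
    intro x hx
    exact ⟨lt_of_lt_of_le hb hx.1, lt_of_le_of_lt hx.2 hp1⟩
  have hanti : StrictAntiOn (klg p) (Set.Icc b p) := by
    apply strictAntiOn_of_deriv_neg (convex_Icc b p)
    · intro x hx
      obtain ⟨h0, h1⟩ := hmem x hx
      exact (hasDerivAt_klg p h0 h1).continuousAt.continuousWithinAt
    · rw [interior_Icc]
      intro x hx
      obtain ⟨h0, h1⟩ := hmem x (Set.mem_Icc_of_Ioo hx)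
      rw [(hasDerivAt_klg p h0 h1).deriv]
      have l1 : Real.log x < Real.log p := Real.log_lt_log h0 hx.2
      have l2 : Real.log (1 - p) < Real.log (1 - x) :=
        Real.log_lt_log (by linarith) (by linarith [hx.2])
      linarith
  have := hanti (Set.left_mem_Icc.2 (le_of_lt hbp)) (Set.right_mem_Icc.2 (le_of_lt hbp)) hbp
  rw [← kl_eq_klg hb hb1 hp0 hp1, ← kl_eq_klg hp0 hp1 hp0 hp1, kl_self p hp0 hp1] at this
  linarith

lemma binomPMF_flip {n i : ℕ} (hi : i ≤ n) (p : ℝ) :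
    binomPMF n (1 - p) i = binomPMF n p (n - i) := by
  unfold binomPMF
  rw [Nat.choose_symm hi, sub_sub_cancel]
  have e : n - (n - i) = i := by omega
  rw [e]
  ring

lemma medianA {n m : ℕ} {p : ℝ} (hm : m < n) (hn2 : n ≤ 2 * m + 1)
    (hp0 : 0 < p) (hp1 : p < 1) (hnp : (n : ℝ) * p ≤ m) :
    1 / 2 ≤ binomCDF n p m := by
  obtain ⟨u, hu⟩ : ∃ u, n = m + u := ⟨n - m, by omega⟩
  have hu1 : 1 ≤ u := by omega
  have hum : u ≤ m + 1 := by omega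
  have hq0 : (0:ℝ) ≤ 1 - p := by linarith
  have hq1 : (1:ℝ) - p ≤ 1 := by linarith
  -- split the total sum
  have hsplit : binomCDF n p m + ∑ i ∈ Finset.range u, binomPMF n (1 - p) (u - 1 - i) = 1 := by
    have h1 : ∀ i ∈ Finset.range u, binomPMF n (1 - p) (u - 1 - i) = binomPMF n p (m + 1 + i) := by
      intro i hi
      rw [Finset.mem_range] at hi
      rw [binomPMF_flip (by omega) p]
      congr 1
      omega
    rw [Finset.sum_congr rfl h1]
    have h2 : ∑ k ∈ Finset.Ico (m + 1) (n + 1), binomPMF n p k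
        = ∑ i ∈ Finset.range u, binomPMF n p (m + 1 + i) := by
      rw [Finset.sum_Ico_eq_sum_range]
      have e : n + 1 - (m + 1) = u := by omega
      rw [e]
    rw [← h2]
    unfold binomCDF
    rw [Finset.range_eq_Ico, Finset.sum_Ico_consecutive _ (by omega) (by omega)]
    rw [← Finset.range_eq_Ico]
    exact sum_binomPMF n p
  -- pairing
  have pairing : ∀ i ∈ Finset.range u,
      binomPMF n (1 - p) (u - 1 - i) ≤ binomPMF n (1 - p) (u + i) := by
    intro i hi
    rw [Finset.mem_range] at hi
    have hn0 : (0:ℝ) < n := by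
      have : 0 < n := by omega
      exact_mod_cast this
    have hpm : p ≤ (m : ℝ) / n := by
      rw [le_div_iff₀ hn0]; linarith
    have hqu : (u : ℝ) / n ≤ 1 - p := by
      rw [div_le_iff₀ hn0]
      have : ((u : ℕ) : ℝ) = (n : ℝ) - m := by
        rw [hu]; push_cast; ring
      rw [this]; nlinarith
    -- core : choose(u-1-i) * p^(2i+1) ≤ choose(u+i) * q^(2i+1)
    have core : (n.choose (u - 1 - i) : ℝ) * p ^ (2 * i + 1)
        ≤ (n.choose (u + i) : ℝ) * (1 - p) ^ (2 * i + 1) := by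
      have key := choose_key m u hum i hi
      have keyR : (m : ℝ) ^ (2*i+1) * (n.choose (u - 1 - i) : ℝ)
          ≤ (u : ℝ) ^ (2*i+1) * (n.choose (u + i) : ℝ) := by
        rw [hu]; exact_mod_cast key
      calc (n.choose (u - 1 - i) : ℝ) * p ^ (2 * i + 1)
          ≤ (n.choose (u - 1 - i) : ℝ) * ((m : ℝ) / n) ^ (2 * i + 1) := by
            apply mul_le_mul_of_nonneg_left _ (Nat.cast_nonneg _)
            exact pow_le_pow_left₀ (le_of_lt hp0) hpm _
        _ = ((m : ℝ) ^ (2*i+1) * (n.choose (u - 1 - i) : ℝ)) / (n : ℝ) ^ (2*i+1) := by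
            rw [div_pow]; ring
        _ ≤ ((u : ℝ) ^ (2*i+1) * (n.choose (u + i) : ℝ)) / (n : ℝ) ^ (2*i+1) := by
            gcongr
        _ = (n.choose (u + i) : ℝ) * ((u : ℝ) / n) ^ (2 * i + 1) := by
            rw [div_pow]; ring
        _ ≤ (n.choose (u + i) : ℝ) * (1 - p) ^ (2 * i + 1) := by
            apply mul_le_mul_of_nonneg_left _ (Nat.cast_nonneg _)
            exact pow_le_pow_left₀ (by positivity) hqu _
    -- assemble
    have hflip : (1 : ℝ) - (1 - p) = p := by ring
    unfold binomPMF
    rw [hflip]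
    have E1 : (1-p)^(u+i) = (1-p)^(u-1-i) * (1-p)^(2*i+1) := by
      rw [← pow_add]
      congr 1
      omega
    have E2 : p^(n-(u-1-i)) = p^(n-(u+i)) * p^(2*i+1) := by
      rw [← pow_add]
      congr 1
      omega
    rw [E1, E2]
    calc (n.choose (u-1-i) : ℝ) * (1-p)^(u-1-i) * (p^(n-(u+i)) * p^(2*i+1))
        = ((n.choose (u-1-i) : ℝ) * p^(2*i+1)) * ((1-p)^(u-1-i) * p^(n-(u+i))) := by ring
      _ ≤ ((n.choose (u+i) : ℝ) * (1-p)^(2*i+1)) * ((1-p)^(u-1-i) * p^(n-(u+i))) :=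
          mul_le_mul_of_nonneg_right core (by positivity)
      _ = (n.choose (u+i) : ℝ) * ((1-p)^(u-1-i) * (1-p)^(2*i+1)) * p^(n-(u+i)) := by ring
  -- conclude
  have hTS : ∑ i ∈ Finset.range u, binomPMF n (1 - p) (u - 1 - i)
      ≤ ∑ i ∈ Finset.range u, binomPMF n (1 - p) (u + i) := Finset.sum_le_sum pairing
  have hS_Ico : ∑ i ∈ Finset.range u, binomPMF n (1 - p) (u + i)
      = ∑ k ∈ Finset.Ico u (2 * u), binomPMF n (1 - p) k := by
    rw [Finset.sum_Ico_eq_sum_range]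
    have e : 2 * u - u = u := by omega
    rw [e]
  have hTrefl : ∑ i ∈ Finset.range u, binomPMF n (1 - p) (u - 1 - i)
      = ∑ i ∈ Finset.range u, binomPMF n (1 - p) i :=
    Finset.sum_range_reflect (binomPMF n (1 - p)) u
  have hconsec : ∑ i ∈ Finset.range u, binomPMF n (1 - p) i
      + ∑ k ∈ Finset.Ico u (2 * u), binomPMF n (1 - p) k
      = ∑ k ∈ Finset.range (2 * u), binomPMF n (1 - p) k := by
    simp only [Finset.range_eq_Ico]
    exact Finset.sum_Ico_consecutive _ (by omega) (by omega)
  have hle1 : ∑ k ∈ Finset.range (2 * u), binomPMF n (1 - p) k ≤ 1 := by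
    refine le_trans ?_ (le_of_eq (sum_binomPMF n (1 - p)))
    apply Finset.sum_le_sum_of_subset_of_nonneg
    · exact Finset.range_subset_range.2 (by omega)
    · intro k _ _
      exact binomPMF_nonneg_s6 hq0 hq1 k
  linarith [hsplit, hTS, hS_Ico, hTrefl, hconsec, hle1]

-- derivative of a single pmf term, k ≥ 1
lemma hasDerivAt_term (n k : ℕ) (hk : 1 ≤ k) (x : ℝ) :
    HasDerivAt (fun x : ℝ => (n.choose k : ℝ) * x ^ k * (1 - x) ^ (n - k))
      ((n.choose k : ℝ) * ((k : ℝ) * x ^ (k - 1) * (1 - x) ^ (n - k)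
        - ((n - k : ℕ) : ℝ) * x ^ k * (1 - x) ^ (n - k - 1))) x := by
  have h1 : HasDerivAt (fun x : ℝ => x ^ k) ((k : ℝ) * x ^ (k - 1)) x := hasDerivAt_pow k x
  have hu : HasDerivAt (fun x : ℝ => 1 - x) (-1) x := by
    exact ((hasDerivAt_const x (1:ℝ)).sub (hasDerivAt_id x)).congr_deriv (zero_sub _)
  have h2 : HasDerivAt (fun x : ℝ => (1 - x) ^ (n - k))
      (-(((n - k : ℕ) : ℝ) * (1 - x) ^ (n - k - 1))) x := by
    have := (hasDerivAt_pow (n - k) (1 - x)).comp x hu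
    refine this.congr_deriv ?_
    ring
  have h3 := ((h1.mul h2).const_mul ((n.choose k : ℝ)))
  have hfe : (fun x : ℝ => (n.choose k : ℝ) * x ^ k * (1 - x) ^ (n - k))
      = fun x : ℝ => (n.choose k : ℝ) * (x ^ k * (1 - x) ^ (n - k)) := by
    funext y; ring
  rw [hfe]
  refine h3.congr_deriv ?_
  ring

lemma tail_eq_integral {n m : ℕ} (hm : m < n) (p : ℝ) :
    1 - binomCDF n p m
      = (((m + 1) * n.choose (m + 1) : ℕ) : ℝ)
        * ∫ t in (0:ℝ)..p, t ^ m * (1 - t) ^ (n - m - 1) := by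
  set e : ℕ → ℝ → ℝ := fun j x => (n : ℝ) * ((n-1).choose j : ℝ) * x ^ j * (1 - x) ^ (n - 1 - j)
    with he
  set g : ℝ → ℝ := fun x => (((m + 1) * n.choose (m + 1) : ℕ) : ℝ) * (x ^ m * (1 - x) ^ (n - m - 1))
    with hg
  have hge : ∀ x, g x = e m x := by
    intro x
    rw [hg, he]
    have h1 : (m + 1) * n.choose (m + 1) = n * (n-1).choose m := by
      have h := Nat.add_one_mul_choose_eq (n - 1) m
      have hn1 : n - 1 + 1 = n := by omega
      rw [hn1] at h
      exact (Nat.mul_comm _ _).trans h.symm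
    rw [h1]
    push_cast
    have h2 : n - 1 - m = n - m - 1 := by omega
    rw [h2]
    ring
  set F : ℝ → ℝ := fun x => ∑ k ∈ Finset.Ico (m + 1) (n + 1), (n.choose k : ℝ) * x ^ k * (1 - x) ^ (n - k)
    with hF
  -- F has derivative g
  have hderiv : ∀ x : ℝ, HasDerivAt F (g x) x := by
    intro x
    have hterm : ∀ k ∈ Finset.Ico (m + 1) (n + 1),
        HasDerivAt (fun x : ℝ => (n.choose k : ℝ) * x ^ k * (1 - x) ^ (n - k))
          (e (k - 1) x - e k x) x := by
      intro k hk
      rw [Finset.mem_Ico] at hk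
      have hk1 : 1 ≤ k := by omega
      have heq : (n.choose k : ℝ) * ((k : ℝ) * x ^ (k - 1) * (1 - x) ^ (n - k)
          - ((n - k : ℕ) : ℝ) * x ^ k * (1 - x) ^ (n - k - 1)) = e (k - 1) x - e k x := by
        show _ = (n : ℝ) * (((n-1).choose (k-1) : ℕ) : ℝ) * x ^ (k-1) * (1 - x) ^ (n - 1 - (k-1))
            - (n : ℝ) * (((n-1).choose k : ℕ) : ℝ) * x ^ k * (1 - x) ^ (n - 1 - k)
        have i1 : k * n.choose k = n * (n-1).choose (k-1) := by
          have h := Nat.add_one_mul_choose_eq (n - 1) (k - 1)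
          have hn1 : n - 1 + 1 = n := by omega
          have hk1' : k - 1 + 1 = k := by omega
          rw [hn1, hk1'] at h
          exact (Nat.mul_comm _ _).trans h.symm
        have i2 : (n - k) * n.choose k = n * (n-1).choose k := by
          rcases Nat.lt_or_ge k n with h' | h' 
          · have h := Nat.add_one_mul_choose_eq (n - 1) k
            have hn1 : n - 1 + 1 = n := by omega
            rw [hn1] at h
            have hId := Nat.choose_succ_right_eq n k
            exact ((h.trans hId).trans (Nat.mul_comm _ _)).symm
          · have hkn : k = n := by omega
            rw [hkn, Nat.sub_self, Nat.choose_eq_zero_of_lt (by omega : n - 1 < n)]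
            simp
        have c1 : ((k : ℝ)) * (n.choose k : ℝ) = (n : ℝ) * ((n-1).choose (k-1) : ℝ) := by
          exact_mod_cast congrArg (Nat.cast : ℕ → ℝ) i1
        have c2 : (((n - k : ℕ)) : ℝ) * (n.choose k : ℝ) = (n : ℝ) * ((n-1).choose k : ℝ) := by
          exact_mod_cast congrArg (Nat.cast : ℕ → ℝ) i2
        have e1 : n - 1 - (k - 1) = n - k := by omega
        have e2 : n - 1 - k = n - k - 1 := by omega
        rw [e1, e2]
        linear_combination x ^ (k - 1) * (1 - x) ^ (n - k) * c1 - x ^ k * (1 - x) ^ (n - k - 1) * c2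
      rw [← heq]
      exact hasDerivAt_term n k hk1 x
    have hsum := HasDerivAt.fun_sum hterm
    rw [hF]
    refine hsum.congr_deriv ?_
    -- g x = ∑ (e (k-1) x - e k x)
    have htel : ∑ k ∈ Finset.Ico (m + 1) (n + 1), (e (k - 1) x - e k x) = e m x - e n x := by
      rw [Finset.sum_Ico_eq_sum_range]
      have hr : n + 1 - (m + 1) = n - m := by omega
      rw [hr]
      have hsummand : ∀ i, e (m + 1 + i - 1) x - e (m + 1 + i) x
          = (fun j => e (m + j) x) i - (fun j => e (m + j) x) (i + 1) := by
        intro i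
        simp only
        congr 2 <;> omega
      calc ∑ i ∈ Finset.range (n - m), (e (m + 1 + i - 1) x - e (m + 1 + i) x)
          = ∑ i ∈ Finset.range (n - m), ((fun j => e (m + j) x) i - (fun j => e (m + j) x) (i + 1)) := by
            exact Finset.sum_congr rfl fun i _ => hsummand i
        _ = (fun j => e (m + j) x) 0 - (fun j => e (m + j) x) (n - m) := Finset.sum_range_sub' _ _
        _ = e m x - e n x := by
            simp only
            congr 2 <;> omega
    have hen : e n x = 0 := by
      rw [he]
      simp [Nat.choose_eq_zero_of_lt (by omega : n - 1 < n)]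
    rw [htel, hen, hge x]
    ring
  -- FTC
  have hcont : Continuous g := by
    rw [hg]
    continuity
  have hint := intervalIntegral.integral_eq_sub_of_hasDerivAt
    (f := F) (f' := g) (a := 0) (b := p)
    (fun x _ => hderiv x) (hcont.intervalIntegrable 0 p)
  -- F p = 1 - binomCDF n p m ; F 0 = 0
  have hF0 : F 0 = 0 := by
    rw [hF]
    apply Finset.sum_eq_zero
    intro k hk
    rw [Finset.mem_Ico] at hk
    have : (0:ℝ) ^ k = 0 := zero_pow (by omega)
    rw [this]
    ring
  have hFp : F p = 1 - binomCDF n p m := by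
    rw [hF]
    have hsplit := sum_binomPMF n p
    rw [Finset.range_eq_Ico, ← Finset.sum_Ico_consecutive _ (by omega : 0 ≤ m + 1) (by omega : m + 1 ≤ n + 1)] at hsplit
    unfold binomCDF binomPMF at *
    rw [Finset.range_eq_Ico]
    linarith [hsplit]
  rw [hFp, hF0, sub_zero] at hint
  rw [← hint, intervalIntegral.integral_const_mul]

-- scaled reflection inequality: for 1 ≤ m ≤ u, 0 ≤ z ≤ m :
-- (m-z)^m (u+z)^(u-1) ≤ (m+z)^m (u-z)^(u-1)
lemma reflect_z (m u : ℕ) (hm : 1 ≤ m) (hmu : m ≤ u) {z : ℝ} (hz0 : 0 ≤ z) (hzM : z ≤ (m:ℝ)) :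
    ((m:ℝ) - z) ^ m * ((u:ℝ) + z) ^ (u-1) ≤ ((m:ℝ) + z) ^ m * ((u:ℝ) - z) ^ (u-1) := by
  have hM1 : (1:ℝ) ≤ (m:ℝ) := by exact_mod_cast hm
  have hMU : (m:ℝ) ≤ (u:ℝ) := by exact_mod_cast hmu
  rcases eq_or_lt_of_le hzM with hzM' | hzM'
  · -- z = m
    have h0 : ((m:ℝ) - z) = 0 := by rw [← hzM']; ring
    rw [h0, zero_pow (by omega : m ≠ 0), zero_mul]
    exact mul_nonneg (pow_nonneg (by linarith) _) (pow_nonneg (by linarith [hzM']) _)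
  · -- z < m
    set M := (m:ℝ) with hMdef
    set U := (u:ℝ) with hUdef
    -- H and its derivative
    set H : ℝ → ℝ := fun y =>
      M * (Real.log (M + y) - Real.log (M - y)) - (U - 1) * (Real.log (U + y) - Real.log (U - y))
      with hH
    have hderiv : ∀ y ∈ Set.Icc 0 z, HasDerivAt H
        (M * ((M + y)⁻¹ + (M - y)⁻¹) - (U - 1) * ((U + y)⁻¹ + (U - y)⁻¹)) y := by
      intro y hy
      obtain ⟨hy0, hyz⟩ := hy
      have p1 : M + y > 0 := by linarith
      have p2 : M - y > 0 := by linarith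
      have p3 : U + y > 0 := by linarith
      have p4 : U - y > 0 := by linarith
      have d1 : HasDerivAt (fun y : ℝ => Real.log (M + y)) ((M + y)⁻¹) y := by
        have hi : HasDerivAt (fun y : ℝ => M + y) 1 y := (hasDerivAt_id y).const_add M
        have := (Real.hasDerivAt_log (ne_of_gt p1)).comp y hi
        exact this.congr_deriv (mul_one _)
      have d2 : HasDerivAt (fun y : ℝ => Real.log (M - y)) (-(M - y)⁻¹) y := by
        have hi : HasDerivAt (fun y : ℝ => M - y) (-1) y := by
          exact ((hasDerivAt_const y M).sub (hasDerivAt_id y)).congr_deriv (zero_sub _)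
        have := (Real.hasDerivAt_log (ne_of_gt p2)).comp y hi
        refine this.congr_deriv ?_
        ring
      have d3 : HasDerivAt (fun y : ℝ => Real.log (U + y)) ((U + y)⁻¹) y := by
        have hi : HasDerivAt (fun y : ℝ => U + y) 1 y := (hasDerivAt_id y).const_add U
        have := (Real.hasDerivAt_log (ne_of_gt p3)).comp y hi
        exact this.congr_deriv (mul_one _)
      have d4 : HasDerivAt (fun y : ℝ => Real.log (U - y)) (-(U - y)⁻¹) y := by
        have hi : HasDerivAt (fun y : ℝ => U - y) (-1) y := by
          exact ((hasDerivAt_const y U).sub (hasDerivAt_id y)).congr_deriv (zero_sub _)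
        have := (Real.hasDerivAt_log (ne_of_gt p4)).comp y hi
        refine this.congr_deriv ?_
        ring
      have := ((d1.sub d2).const_mul M).sub ((d3.sub d4).const_mul (U - 1))
      refine this.congr_deriv ?_
      ring
    -- derivative nonneg on [0,z] (z < M)
    have hD : ∀ y ∈ Set.Icc (0:ℝ) z,
        0 ≤ M * ((M + y)⁻¹ + (M - y)⁻¹) - (U - 1) * ((U + y)⁻¹ + (U - y)⁻¹) := by
      intro y hy
      obtain ⟨hy0, hyz⟩ := hy
      have p1 : M + y > 0 := by linarith
      have p2 : M - y > 0 := by linarith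
      have p3 : U + y > 0 := by linarith
      have p4 : U - y > 0 := by linarith
      have e1 : (M + y)⁻¹ + (M - y)⁻¹ = (2*M) / ((M + y)*(M - y)) := by
        field_simp
        ring
      have e2 : (U + y)⁻¹ + (U - y)⁻¹ = (2*U) / ((U + y)*(U - y)) := by
        field_simp
        ring
      rw [e1, e2, sub_nonneg, ← mul_div_assoc, ← mul_div_assoc,
          div_le_div_iff₀ (by positivity) (by positivity)]
      -- (U-1)*(2U) * ((M+y)(M-y)) ≤ M*(2M) * ((U+y)(U-y))
      have hy2 : y^2 ≤ M^2 := by nlinarith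
      rcases le_or_gt (U^2 - U) (M^2) with hcase | hcase
      · have k1 : y^2 * (M^2 - (U^2 - U)) ≤ M^2 * (M^2 - (U^2 - U)) :=
          mul_le_mul_of_nonneg_right hy2 (by linarith)
        have hM2U2 : M^2 ≤ U^2 := pow_le_pow_left₀ (by linarith) hMU 2
        have k2 : (0:ℝ) ≤ M^2 * (U^2 - M^2) := mul_nonneg (sq_nonneg M) (by linarith)
        nlinarith [k1, k2]
      · have k3 : (0:ℝ) ≤ y^2 * ((U^2 - U) - M^2) := mul_nonneg (sq_nonneg y) (by linarith)
        nlinarith [k3]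
    -- monotone, so H z ≥ H 0 = 0
    have hmono : MonotoneOn H (Set.Icc 0 z) := by
      apply monotoneOn_of_deriv_nonneg (convex_Icc 0 z)
      · intro y hy
        exact (hderiv y hy).continuousAt.continuousWithinAt
      · intro y hy
        rw [interior_Icc] at hy
        exact (hderiv y (Set.mem_Icc_of_Ioo hy)).differentiableAt.differentiableWithinAt
      · intro y hy
        rw [interior_Icc] at hy
        rw [(hderiv y (Set.mem_Icc_of_Ioo hy)).deriv]
        exact hD y (Set.mem_Icc_of_Ioo hy)
    have hH0 : H 0 = 0 := by
      rw [hH]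
      simp
    have hHz : 0 ≤ H z := by
      rw [← hH0]
      exact hmono (Set.left_mem_Icc.2 hz0) (Set.mem_Icc.2 ⟨hz0, le_refl z⟩) hz0
    -- convert to products
    have p1 : M + z > 0 := by linarith
    have p2 : M - z > 0 := by linarith
    have p3 : U + z > 0 := by linarith
    have p4 : U - z > 0 := by linarith
    have hu1 : ((u - 1 : ℕ) : ℝ) = U - 1 := by
      rw [Nat.cast_sub (le_trans hm hmu)]
      simp [hUdef]
    have hL : (0:ℝ) < (M - z) ^ m * (U + z) ^ (u-1) := by positivity
    have hR : (0:ℝ) < (M + z) ^ m * (U - z) ^ (u-1) := by positivity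
    rw [← Real.exp_log hL, ← Real.exp_log hR]
    apply Real.exp_le_exp.2
    rw [Real.log_mul (by positivity) (by positivity), Real.log_mul (by positivity) (by positivity)]
    simp only [Real.log_pow]
    rw [hu1, ← hMdef]
    rw [hH] at hHz
    simp only at hHz
    linarith [hHz]

lemma medianB {n m : ℕ} {p : ℝ} (hm1 : 1 ≤ m) (hmn : m < n) (h2m : 2 * m ≤ n)
    (hp0 : 0 < p) (hp1 : p < 1) (hnp : (n : ℝ) * p ≤ m) :
    1 / 2 ≤ binomCDF n p m := by
  obtain ⟨u, hu⟩ : ∃ u, u = n - m := ⟨n - m, rfl⟩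
  have hmu : m ≤ u := by omega
  have hn0 : (0:ℝ) < n := by
    have : 0 < n := by omega
    exact_mod_cast this
  have hU : (u:ℝ) = (n:ℝ) - m := by
    rw [hu]
    push_cast [Nat.cast_sub (le_of_lt hmn)]
    ring
  obtain ⟨c, hc⟩ : ∃ c : ℝ, c = (m:ℝ)/n := ⟨_, rfl⟩
  have hc0 : 0 < c := by rw [hc]; positivity
  have h2c : 2*c ≤ 1 := by
    rw [hc]
    rw [show 2*((m:ℝ)/n) = (2*(m:ℝ))/n by ring, div_le_one hn0]
    exact_mod_cast h2m
  have hpc : p ≤ c := by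
    rw [hc, le_div_iff₀ hn0]
    linarith
  set f : ℝ → ℝ := fun t => t ^ m * (1 - t) ^ (n - m - 1) with hf
  have hfc : Continuous f := by
    rw [hf]
    continuity
  have hfnn : ∀ t ∈ Set.Icc (0:ℝ) 1, 0 ≤ f t := by
    intro t ht
    obtain ⟨h1, h2⟩ := ht
    rw [hf]
    have : (0:ℝ) ≤ 1 - t := by linarith
    positivity
  set K : ℝ := (((m + 1) * n.choose (m + 1) : ℕ) : ℝ) with hK
  have hK0 : 0 ≤ K := Nat.cast_nonneg _
  have hid : ∀ q : ℝ, 1 - binomCDF n q m = K * ∫ t in (0:ℝ)..q, f t := fun q =>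
    tail_eq_integral hmn q
  -- CDF at 1 is 0
  have hCDF1 : binomCDF n (1:ℝ) m = 0 := by
    unfold binomCDF binomPMF
    apply Finset.sum_eq_zero
    intro k hk
    rw [Finset.mem_range] at hk
    rw [sub_self, zero_pow (by omega : n - k ≠ 0)]
    ring
  have hK1 : K * ∫ t in (0:ℝ)..1, f t = 1 := by
    have := hid 1
    rw [hCDF1] at this
    linarith
  -- pointwise reflection
  have hpoint : ∀ x ∈ Set.Icc (0:ℝ) c, f (c - x) ≤ f (c + x) := by
    intro x hx
    obtain ⟨hx0, hxc⟩ := hx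
    obtain ⟨z, hz⟩ : ∃ z : ℝ, z = (n:ℝ) * x := ⟨_, rfl⟩
    have hz0 : 0 ≤ z := by rw [hz]; positivity
    have hzM : z ≤ (m:ℝ) := by
      rw [hz]
      calc (n:ℝ) * x ≤ (n:ℝ) * c := by
            apply mul_le_mul_of_nonneg_left hxc (le_of_lt hn0)
        _ = m := by rw [hc]; field_simp
    have key := reflect_z m u hm1 hmu hz0 hzM
    have e1 : c - x = ((m:ℝ) - z)/n := by
      rw [hc, hz]; field_simp
    have e2 : 1 - (c - x) = ((u:ℝ) + z)/n := by
      rw [hU, hc, hz]; field_simp; ring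
    have e3 : c + x = ((m:ℝ) + z)/n := by
      rw [hc, hz]; field_simp
    have e4 : 1 - (c + x) = ((u:ℝ) - z)/n := by
      rw [hU, hc, hz]; field_simp; ring
    have eexp : n - m - 1 = u - 1 := by omega
    rw [hf]
    simp only
    rw [eexp, e2, e1, e4, e3, div_pow, div_pow, div_pow, div_pow,
        div_mul_div_comm, div_mul_div_comm, ← pow_add]
    have hNpow : (0:ℝ) < (n:ℝ)^(m+(u-1)) := pow_pos hn0 _
    exact (div_le_div_iff_of_pos_right hNpow).2 key
  -- integral comparisons
  have hint : ∀ a b : ℝ, IntervalIntegrable f MeasureTheory.volume a b :=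
    fun a b => hfc.intervalIntegrable a b
  have I1 : (∫ t in (0:ℝ)..p, f t) ≤ ∫ t in (0:ℝ)..c, f t := by
    rw [← intervalIntegral.integral_add_adjacent_intervals (hint 0 p) (hint p c)]
    have : 0 ≤ ∫ t in p..c, f t := by
      apply intervalIntegral.integral_nonneg hpc
      intro x hx
      exact hfnn x ⟨by linarith [hx.1], by linarith [hx.2, h2c, hc0]⟩
    linarith
  have I2 : (∫ t in (0:ℝ)..c, f t) ≤ ∫ t in c..(2*c), f t := by
    have hL : (∫ t in (0:ℝ)..c, f t) = ∫ x in (0:ℝ)..c, f (c - x) := by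
      rw [intervalIntegral.integral_comp_sub_left f c]
      norm_num
    have hR : (∫ t in c..(2*c), f t) = ∫ x in (0:ℝ)..c, f (c + x) := by
      rw [intervalIntegral.integral_comp_add_left f c]
      norm_num [two_mul]
    rw [hL, hR]
    apply intervalIntegral.integral_mono_on (le_of_lt hc0)
      ((hfc.comp (continuous_const.sub continuous_id)).intervalIntegrable 0 c)
      ((hfc.comp (continuous_const.add continuous_id)).intervalIntegrable 0 c)
    exact hpoint
  have I3 : (∫ t in c..(2*c), f t) ≤ ∫ t in c..1, f t := by
    rw [← intervalIntegral.integral_add_adjacent_intervals (hint c (2*c)) (hint (2*c) 1)]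
    have : 0 ≤ ∫ t in (2*c)..1, f t := by
      apply intervalIntegral.integral_nonneg h2c
      intro x hx
      exact hfnn x ⟨by linarith [hx.1, hc0], hx.2⟩
    linarith
  have Isplit : (∫ t in (0:ℝ)..c, f t) + (∫ t in c..1, f t) = ∫ t in (0:ℝ)..1, f t :=
    intervalIntegral.integral_add_adjacent_intervals (hint 0 c) (hint c 1)
  -- conclude
  have hchain : K * (∫ t in (0:ℝ)..p, f t) ≤ 1/2 := by
    have h1 : (∫ t in (0:ℝ)..p, f t) ≤ ∫ t in c..1, f t := le_trans I1 (le_trans I2 I3)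
    have h2 : 2 * (∫ t in (0:ℝ)..p, f t) ≤ ∫ t in (0:ℝ)..1, f t := by
      linarith [I1, I2, I3, Isplit]
    nlinarith [mul_le_mul_of_nonneg_left h2 hK0, hK1]
  have := hid p
  linarith

lemma median {n m : ℕ} {p : ℝ} (hp0 : 0 < p) (hp1 : p < 1) (hnp : (n : ℝ) * p ≤ m) :
    1 / 2 ≤ binomCDF n p m := by
  rcases Nat.lt_or_ge m n with hmn | hmn
  · -- m < n
    have hm1 : 1 ≤ m := by
      by_contra h
      have hm0 : m = 0 := by omega
      have hn1 : 1 ≤ n := by omega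
      have : (0:ℝ) < (n:ℝ) * p := by
        apply mul_pos _ hp0
        exact_mod_cast hn1
      rw [hm0] at hnp
      simp at hnp
      linarith
    rcases le_or_gt n (2 * m + 1) with h2 | h2
    · exact medianA hmn h2 hp0 hp1 hnp
    · exact medianB hm1 hmn (by omega) hp0 hp1 hnp
  · -- m ≥ n : CDF = 1
    have hone : binomCDF n p m = 1 := by
      unfold binomCDF
      rw [Finset.range_eq_Ico,
          ← Finset.sum_Ico_consecutive _ (by omega : 0 ≤ n + 1) (by omega : n + 1 ≤ m + 1)]
      have hz : ∀ k ∈ Finset.Ico (n + 1) (m + 1), binomPMF n p k = 0 := by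
        intro k hk
        rw [Finset.mem_Ico] at hk
        unfold binomPMF
        rw [Nat.choose_eq_zero_of_lt (by omega)]
        simp
      rw [Finset.sum_congr rfl hz]
      simp only [Finset.sum_const_zero, add_zero]
      rw [← Finset.range_eq_Ico]
      exact sum_binomPMF n p
    rw [hone]
    norm_num

/-- let 0 < y < y' < 1 and y_mid = (y+y')/2. If j+1 ≥ (ln 4)/kl(y_mid,y'),
then for every integer s with (j+1)y ≤ s ≤ (j+1)y_mid:
P(S_{j+1,y'} ≤ s) ≤ 1/4 ≤ (1/2) P(S_{j+1,y} ≤ s), hence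
P(S_{j+1,y} ≤ s) - P(S_{j+1,y'} ≤ s) ≥ (1/2) P(S_{j+1,y} ≤ s). -/
theorem binomial_middle_case (j s : ℕ) (y y' : ℝ) (hy0 : 0 < y) (hyy : y < y') (hy1 : y' < 1)
    (hj : Real.log 4 / kl ((y + y') / 2) y' ≤ (j : ℝ) + 1)
    (hs1 : ((j : ℝ) + 1) * y ≤ (s : ℝ)) (hs2 : (s : ℝ) ≤ ((j : ℝ) + 1) * ((y + y') / 2)) :
    binomCDF (j + 1) y' s ≤ 1 / 4 ∧
    1 / 4 ≤ (1 / 2) * binomCDF (j + 1) y s ∧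
    (1 / 2) * binomCDF (j + 1) y s ≤ binomCDF (j + 1) y s - binomCDF (j + 1) y' s := by
  set n : ℕ := j + 1 with hn
  have hncast : ((n:ℕ):ℝ) = (j:ℝ) + 1 := by rw [hn]; push_cast; ring
  have hn0 : (0:ℝ) < n := by rw [hncast]; positivity
  set ymid : ℝ := (y + y') / 2 with hymid
  have hymid0 : 0 < ymid := by rw [hymid]; linarith
  have hymidy' : ymid < y' := by rw [hymid]; linarith
  have hymid1 : ymid < 1 := by linarith
  -- s ≥ 1
  have hs_pos : 1 ≤ s := by
    by_contra h
    have : s = 0 := by omega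
    rw [this] at hs1
    push_cast at hs1
    nlinarith [hs1, hncast]
  -- s < n
  have hsn : s < n := by
    by_contra h
    have h' : (n:ℝ) ≤ (s:ℝ) := by exact_mod_cast not_lt.1 h
    rw [hncast] at h'
    nlinarith [hs2, hncast]
  have hs1' : ((n:ℕ):ℝ) * y ≤ s := by rw [hncast]; exact hs1
  have hs2' : (s:ℝ) ≤ ((n:ℕ):ℝ) * ymid := by rw [hncast, hymid]; exact hs2
  -- part 1 : Chernoff
  have hklpos : 0 < kl ymid y' := kl_pos hy1 hymid0 hymidy'
  have hcher : binomCDF n y' s ≤ 1 / 4 := by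
    have h1 := chernoff hs_pos hsn hy1 (le_trans hs2' (by nlinarith [hn0]))
    have ha0 : 0 < (s:ℝ)/n := by
      have : (0:ℝ) < s := by exact_mod_cast hs_pos
      positivity
    have hab : (s:ℝ)/n ≤ ymid := by
      rw [div_le_iff₀ hn0]
      linarith [hs2']
    have hklmono : kl ymid y' ≤ kl ((s:ℝ)/n) y' := kl_anti hy1 ha0 hab (le_of_lt hymidy')
    have hln4 : Real.log 4 ≤ (n:ℝ) * kl ymid y' := by
      have := (div_le_iff₀ hklpos).1 (le_trans hj (le_of_eq hncast.symm))
      linarith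
    have hexp : Real.exp (-(n:ℝ) * kl ((s:ℝ)/n) y') ≤ Real.exp (- Real.log 4) := by
      apply Real.exp_le_exp.2
      have : (n:ℝ) * kl ymid y' ≤ (n:ℝ) * kl ((s:ℝ)/n) y' :=
        mul_le_mul_of_nonneg_left hklmono (le_of_lt hn0)
      nlinarith [hln4, this]
    have h4 : Real.exp (- Real.log 4) = 1/4 := by
      rw [Real.exp_neg, Real.exp_log (by norm_num : (0:ℝ) < 4)]
      norm_num
    calc binomCDF n y' s ≤ Real.exp (-(n:ℝ) * kl ((s:ℝ)/n) y') := h1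
      _ ≤ Real.exp (- Real.log 4) := hexp
      _ = 1/4 := h4
  -- part 2 : median
  have hmed : 1/2 ≤ binomCDF n y s := median hy0 (by linarith) hs1'
  refine ⟨hcher, by linarith, by linarith⟩
end

section
/- Let 0 < p_k < d < 1 and let X_{a,b} denote a Beta(a,b) random variable. There exists j_0 (depending only on y, y', where p_k < y < y' < 1) such that for all j ≥ j_0 and all integers s ∈ {0,...,j}: P(y ≤ X_{s+1, j-s+1} ≤ y') ≥ (1/2) min{ P(X_{s+1, j-s+1} ≥ y), P(X_{s+1, j-s+1} ≤ y') }. -/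
/-- CDF of the Beta(a,b) distribution (integer parameters a,b ≥ 1):
P(X ≤ x) = ∫₀ˣ t^{a-1}(1-t)^{b-1} dt / B(a,b). -/
noncomputable def betaCDF (a b : ℕ) (x : ℝ) : ℝ :=
  (∫ t in Set.Ioc (0 : ℝ) x, t ^ (a - 1) * (1 - t) ^ (b - 1)) /
    (∫ t in Set.Ioc (0 : ℝ) 1, t ^ (a - 1) * (1 - t) ^ (b - 1))

open Real MeasureTheory intervalIntegral Set

private lemma pow_le_exp_mul {x : ℝ} (hx : 0 ≤ x) (n : ℕ) :
    x ^ n ≤ exp ((n : ℝ) * (x - 1)) := by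
  have h : x ≤ exp (x - 1) := by have := Real.add_one_le_exp (x - 1); linarith
  calc x ^ n ≤ (exp (x - 1)) ^ n := pow_le_pow_left₀ hx h n
    _ = exp ((n : ℝ) * (x - 1)) := by rw [← Real.exp_nat_mul]

private lemma exp_mul_le_pow {x : ℝ} (hx : 0 < x) (n : ℕ) :
    exp ((n : ℝ) * (1 - 1 / x)) ≤ x ^ n := by
  have h : exp (1 - 1 / x) ≤ x := by
    have h1 : 1 / x ≤ exp (1 / x - 1) := by have := Real.add_one_le_exp (1 / x - 1); linarith
    have h2 : exp (1 - 1 / x) = (exp (1 / x - 1))⁻¹ := by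
      rw [← Real.exp_neg]; ring_nf
    rw [h2]
    have hpos : 0 < (1 : ℝ) / x := by positivity
    calc (exp (1 / x - 1))⁻¹ ≤ ((1 : ℝ) / x)⁻¹ := inv_anti₀ hpos h1
      _ = x := by field_simp
  calc exp ((n : ℝ) * (1 - 1 / x)) = (exp (1 - 1 / x)) ^ n := by rw [← Real.exp_nat_mul]
    _ ≤ x ^ n := pow_le_pow_left₀ (exp_nonneg _) h n

private lemma pointwise_upper (p q : ℕ) {c t : ℝ} (hc0 : 0 < c) (hc1 : c < 1)
    (ht0 : 0 ≤ t) (ht1 : t ≤ 1) :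
    t ^ p * (1 - t) ^ q ≤
      c ^ p * (1 - c) ^ q * exp (((p : ℝ) * (1 - c) - q * c) / (c * (1 - c)) * (t - c)) := by
  have h1c : (0 : ℝ) < 1 - c := by linarith
  have h1 : t ^ p ≤ c ^ p * exp ((p : ℝ) * ((t - c) / c)) := by
    have h := pow_le_exp_mul (x := t / c) (by positivity) p
    calc t ^ p = c ^ p * (t / c) ^ p := by
          rw [div_pow]; field_simp
      _ ≤ c ^ p * exp ((p : ℝ) * (t / c - 1)) := by
          exact mul_le_mul_of_nonneg_left h (by positivity)
      _ = c ^ p * exp ((p : ℝ) * ((t - c) / c)) := by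
          congr 2; field_simp
  have h2 : (1 - t) ^ q ≤ (1 - c) ^ q * exp (-((q : ℝ) * ((t - c) / (1 - c)))) := by
    have h := pow_le_exp_mul (x := (1 - t) / (1 - c)) (div_nonneg (by linarith) h1c.le) q
    calc (1 - t) ^ q = (1 - c) ^ q * ((1 - t) / (1 - c)) ^ q := by
          rw [div_pow]; field_simp
      _ ≤ (1 - c) ^ q * exp ((q : ℝ) * ((1 - t) / (1 - c) - 1)) := by
          exact mul_le_mul_of_nonneg_left h (by positivity)
      _ = (1 - c) ^ q * exp (-((q : ℝ) * ((t - c) / (1 - c)))) := by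
          congr 2; field_simp; ring
  calc t ^ p * (1 - t) ^ q
      ≤ (c ^ p * exp ((p : ℝ) * ((t - c) / c))) *
        ((1 - c) ^ q * exp (-((q : ℝ) * ((t - c) / (1 - c))))) := by
        have h1t : (0:ℝ) ≤ 1 - t := by linarith
        exact mul_le_mul h1 h2 (by positivity) (by positivity)
    _ = c ^ p * (1 - c) ^ q *
        exp ((p : ℝ) * ((t - c) / c) + -((q : ℝ) * ((t - c) / (1 - c)))) := by
        rw [Real.exp_add]; ring
    _ = c ^ p * (1 - c) ^ q * exp (((p : ℝ) * (1 - c) - q * c) / (c * (1 - c)) * (t - c)) := by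
        congr 2; field_simp; ring

private lemma pointwise_lower (p q : ℕ) {c t : ℝ} (hc0 : 0 < c) (hc1 : c < 1)
    (ht0 : 0 < t) (ht1 : t < 1) :
    c ^ p * (1 - c) ^ q * exp (((p : ℝ) * (1 - t) - q * t) / (t * (1 - t)) * (t - c)) ≤
      t ^ p * (1 - t) ^ q := by
  have h1c : (0 : ℝ) < 1 - c := by linarith
  have h1t : (0 : ℝ) < 1 - t := by linarith
  have h1 : c ^ p * exp ((p : ℝ) * ((t - c) / t)) ≤ t ^ p := by
    have h := exp_mul_le_pow (x := t / c) (by positivity) p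
    calc c ^ p * exp ((p : ℝ) * ((t - c) / t)) = c ^ p * exp ((p : ℝ) * (1 - 1 / (t / c))) := by
          congr 2; field_simp
      _ ≤ c ^ p * (t / c) ^ p := mul_le_mul_of_nonneg_left h (by positivity)
      _ = t ^ p := by rw [div_pow]; field_simp
  have h2 : (1 - c) ^ q * exp (-((q : ℝ) * ((t - c) / (1 - t)))) ≤ (1 - t) ^ q := by
    have h := exp_mul_le_pow (x := (1 - t) / (1 - c)) (by positivity) q
    calc (1 - c) ^ q * exp (-((q : ℝ) * ((t - c) / (1 - t))))
        = (1 - c) ^ q * exp ((q : ℝ) * (1 - 1 / ((1 - t) / (1 - c)))) := by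
          congr 2; field_simp; ring
      _ ≤ (1 - c) ^ q * ((1 - t) / (1 - c)) ^ q := mul_le_mul_of_nonneg_left h (by positivity)
      _ = (1 - t) ^ q := by rw [div_pow]; field_simp
  calc c ^ p * (1 - c) ^ q * exp (((p : ℝ) * (1 - t) - q * t) / (t * (1 - t)) * (t - c))
      = (c ^ p * exp ((p : ℝ) * ((t - c) / t))) *
        ((1 - c) ^ q * exp (-((q : ℝ) * ((t - c) / (1 - t))))) := by
        rw [mul_mul_mul_comm, ← Real.exp_add]; congr 2; field_simp; ring
    _ ≤ t ^ p * (1 - t) ^ q := by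
        exact mul_le_mul h1 h2 (by positivity) (by positivity)

private lemma integral_exp_shift (L a b : ℝ) (hL : L ≠ 0) :
    ∫ t in a..b, exp (L * (t - a)) = (exp (L * (b - a)) - 1) / L := by
  have h : ∀ t ∈ uIcc a b, HasDerivAt (fun t => exp (L * (t - a)) / L) (exp (L * (t - a))) t := by
    intro t _
    have h1 : HasDerivAt (fun t : ℝ => L * (t - a)) L t := by
      simpa using ((hasDerivAt_id t).sub_const a).const_mul L
    have h2 := (Real.hasDerivAt_exp (L * (t - a))).comp t h1
    have h3 := h2.div_const L
    simpa [mul_div_assoc, mul_div_cancel_right₀ _ hL] using h3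
  rw [integral_eq_sub_of_hasDerivAt h
    ((Continuous.intervalIntegrable (by continuity) a b))]
  simp [sub_div]

private lemma g_cont (p q : ℕ) : Continuous (fun t : ℝ => t ^ p * (1 - t) ^ q) := by
  continuity

set_option maxHeartbeats 1000000 in
private lemma core (p q : ℕ) {y y' : ℝ} (hy0 : 0 < y) (hyy : y < y') (hy1 : y' < 1)
    (hmode : (p : ℝ) ≤ ((p : ℝ) + q) * ((y + y') / 2))
    (hj : 1 ≤ ((p : ℝ) + q) * (y' - y) ^ 2) :
    ∫ t in y'..(1 : ℝ), t ^ p * (1 - t) ^ q ≤ ∫ t in y..y', t ^ p * (1 - t) ^ q := by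
  set j : ℝ := (p : ℝ) + q with hjdef
  have hδ : 0 < (y' - y) / 2 := by linarith
  set δ : ℝ := (y' - y) / 2 with hδdef
  set m1 : ℝ := (y + y') / 2 with hm1def
  have hjpos : 0 < j := by nlinarith [sq_nonneg (y' - y)]
  have hy'0 : 0 < y' := lt_trans hy0 hyy
  have h1y' : (0 : ℝ) < 1 - y' := by linarith
  set K : ℝ := y' ^ p * (1 - y') ^ q with hKdef
  have hK : 0 < K := by positivity
  set L : ℝ := ((p : ℝ) * (1 - y') - q * y') / (y' * (1 - y')) with hLdef
  have hLnum : (p : ℝ) * (1 - y') - q * y' ≤ -(j * δ) := by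
    simp only [hjdef, hδdef, hm1def] at hmode ⊢; nlinarith
  have hd4 : y' * (1 - y') ≤ 1 / 4 := by nlinarith [sq_nonneg (y' - (1 - y'))]
  have hjδ : 0 < j * δ := mul_pos hjpos hδ
  have hL4 : L ≤ -(4 * (j * δ)) := by
    rw [hLdef, div_le_iff₀ (by positivity)]
    nlinarith [mul_pos hy'0 h1y']
  have hLneg : L < 0 := lt_of_le_of_lt hL4 (by nlinarith)
  -- Step 1 : bound the upper tail by K * (stuff) ≤ K * δ
  have step1 : ∫ t in y'..(1 : ℝ), t ^ p * (1 - t) ^ q ≤ K * δ := by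
    have hmono : ∫ t in y'..(1 : ℝ), t ^ p * (1 - t) ^ q ≤
        ∫ t in y'..(1 : ℝ), K * exp (L * (t - y')) := by
      apply integral_mono_on hy1.le ((g_cont p q).intervalIntegrable _ _)
        (Continuous.intervalIntegrable (by continuity) _ _)
      intro t ht
      have := pointwise_upper p q hy'0 hy1 (le_trans hy'0.le ht.1) ht.2
      calc t ^ p * (1 - t) ^ q
          ≤ y' ^ p * (1 - y') ^ q *
            exp (((p : ℝ) * (1 - y') - q * y') / (y' * (1 - y')) * (t - y')) := this
        _ = K * exp (L * (t - y')) := by rw [hKdef, hLdef]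
    have hval : ∫ t in y'..(1 : ℝ), K * exp (L * (t - y')) =
        K * ((exp (L * (1 - y')) - 1) / L) := by
      rw [intervalIntegral.integral_const_mul, integral_exp_shift L y' 1 hLneg.ne]
    have hbound : (exp (L * (1 - y')) - 1) / L ≤ δ := by
      have he : 0 < exp (L * (1 - y')) := exp_pos _
      have h1 : (exp (L * (1 - y')) - 1) / L = (1 - exp (L * (1 - y'))) / (-L) := by
        rw [div_neg, ← neg_div, neg_sub]
      rw [h1]
      have hnL : 0 < -L := by linarith
      have h2 : (1 - exp (L * (1 - y'))) / (-L) ≤ 1 / (-L) := by gcongr; linarith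
      have h3 : 1 / (-L) ≤ δ := by
        rw [div_le_iff₀ hnL]
        have h4 : 1 ≤ δ * (4 * (j * δ)) := by
          have h5 : δ * (4 * (j * δ)) = j * (y' - y) ^ 2 := by rw [hδdef]; ring
          linarith
        have h6 : δ * (4 * (j * δ)) ≤ δ * (-L) := by
          apply mul_le_mul_of_nonneg_left (by linarith) hδ.le
        linarith
      linarith
    calc ∫ t in y'..(1 : ℝ), t ^ p * (1 - t) ^ q
        ≤ K * ((exp (L * (1 - y')) - 1) / L) := by rw [← hval]; exact hmono
      _ ≤ K * δ := mul_le_mul_of_nonneg_left hbound hK.le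
  -- Step 2 : K * δ ≤ ∫ m1..y'
  have step2 : K * δ ≤ ∫ t in m1..y', t ^ p * (1 - t) ^ q := by
    have hm1y' : m1 ≤ y' := by rw [hm1def]; linarith
    have hconst : ∫ _t in m1..y', K = K * δ := by
      rw [intervalIntegral.integral_const, smul_eq_mul, hm1def, hδdef]; ring
    rw [← hconst]
    apply integral_mono_on hm1y' (Continuous.intervalIntegrable (by continuity) _ _)
      ((g_cont p q).intervalIntegrable _ _)
    intro t ht
    have ht0 : 0 < t := lt_of_lt_of_le (by rw [hm1def]; linarith) ht.1
    have ht1 : t < 1 := lt_of_le_of_lt ht.2 hy1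
    have hlow := pointwise_lower p q hy'0 hy1 ht0 ht1 (c := y')
    have hE : 0 ≤ ((p : ℝ) * (1 - t) - q * t) / (t * (1 - t)) * (t - y') := by
      have hnum : (p : ℝ) * (1 - t) - q * t ≤ 0 := by
        have hm : m1 ≤ t := ht.1
        simp only [hjdef, hm1def] at hmode hm; nlinarith
      have hden : 0 < t * (1 - t) := by nlinarith
      have h5 : ((p : ℝ) * (1 - t) - q * t) / (t * (1 - t)) ≤ 0 :=
        div_nonpos_of_nonpos_of_nonneg hnum hden.le
      have h6 : t - y' ≤ 0 := by linarith [ht.2]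
      nlinarith
    calc K = K * 1 := (mul_one K).symm
      _ ≤ K * exp (((p : ℝ) * (1 - t) - q * t) / (t * (1 - t)) * (t - y')) := by
          exact mul_le_mul_of_nonneg_left (by simpa using Real.exp_le_exp.mpr hE) hK.le
      _ ≤ t ^ p * (1 - t) ^ q := by
          calc K * exp (((p : ℝ) * (1 - t) - q * t) / (t * (1 - t)) * (t - y'))
              = y' ^ p * (1 - y') ^ q *
                exp (((p : ℝ) * (1 - t) - q * t) / (t * (1 - t)) * (t - y')) := by rw [hKdef]
            _ ≤ t ^ p * (1 - t) ^ q := hlow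
  -- Step 3 : ∫ m1..y' ≤ ∫ y..y'
  have step3 : ∫ t in m1..y', t ^ p * (1 - t) ^ q ≤ ∫ t in y..y', t ^ p * (1 - t) ^ q := by
    have hadd : (∫ t in y..m1, t ^ p * (1 - t) ^ q) + ∫ t in m1..y', t ^ p * (1 - t) ^ q
        = ∫ t in y..y', t ^ p * (1 - t) ^ q := by
      exact intervalIntegral.integral_add_adjacent_intervals
        ((g_cont p q).intervalIntegrable _ _) ((g_cont p q).intervalIntegrable _ _)
    have hpos : 0 ≤ ∫ t in y..m1, t ^ p * (1 - t) ^ q := by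
      apply intervalIntegral.integral_nonneg (by rw [hm1def]; linarith)
      intro u hu
      have hu0 : 0 ≤ u := le_trans hy0.le hu.1
      have hu1 : u ≤ 1 := le_trans hu.2 (by rw [hm1def]; linarith)
      have hu2 : (0 : ℝ) ≤ 1 - u := by linarith
      positivity
    linarith
  linarith

private lemma core_reflect (p q : ℕ) {y y' : ℝ} (hy0 : 0 < y) (hyy : y < y') (hy1 : y' < 1)
    (hmode : ((p : ℝ) + q) * ((y + y') / 2) ≤ p)
    (hj : 1 ≤ ((p : ℝ) + q) * (y' - y) ^ 2) :
    ∫ t in (0 : ℝ)..y, t ^ p * (1 - t) ^ q ≤ ∫ t in y..y', t ^ p * (1 - t) ^ q := by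
  have h := core q p (y := 1 - y') (y' := 1 - y) (by linarith) (by linarith) (by linarith)
    (by nlinarith)
    (by
      have he : ((q : ℝ) + p) * ((1 - y) - (1 - y')) ^ 2 = ((p : ℝ) + q) * (y' - y) ^ 2 := by
        ring
      linarith)
  have e1 : ∫ t in (0 : ℝ)..y, t ^ p * (1 - t) ^ q
      = ∫ x in (1 - y)..(1 - (0 : ℝ)), x ^ q * (1 - x) ^ p := by
    rw [← intervalIntegral.integral_comp_sub_left (fun u => u ^ q * (1 - u) ^ p) 1]
    apply intervalIntegral.integral_congr
    intro x _
    show x ^ p * (1 - x) ^ q = (1 - x) ^ q * (1 - (1 - x)) ^ p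
    ring
  have e2 : ∫ t in y..y', t ^ p * (1 - t) ^ q
      = ∫ x in (1 - y')..(1 - y), x ^ q * (1 - x) ^ p := by
    rw [← intervalIntegral.integral_comp_sub_left (fun u => u ^ q * (1 - u) ^ p) 1]
    apply intervalIntegral.integral_congr
    intro x _
    show x ^ p * (1 - x) ^ q = (1 - x) ^ q * (1 - (1 - x)) ^ p
    ring
  rw [e1, e2]
  simpa using h

/-- for fixed 0 < y < y' < 1 there exists j₀ such that for all j ≥ j₀ and all
integers s ∈ {0,…,j}, the Beta(s+1, j-s+1) random variable X satisfies
P(y ≤ X ≤ y') ≥ (1/2) min{ P(X ≥ y), P(X ≤ y') }. -/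
theorem beta_interval_lower_bound (y y' : ℝ) (hy0 : 0 < y) (hyy : y < y') (hy1 : y' < 1) :
    ∃ j₀ : ℕ, ∀ j ≥ j₀, ∀ s ≤ j,
      (1 / 2) * min (1 - betaCDF (s + 1) (j - s + 1) y) (betaCDF (s + 1) (j - s + 1) y') ≤
        betaCDF (s + 1) (j - s + 1) y' - betaCDF (s + 1) (j - s + 1) y := by
  refine ⟨⌈(y' - y)⁻¹ ^ 2⌉₊ + 1, fun j hj s hs => ?_⟩
  have hy'0 : 0 < y' := lt_trans hy0 hyy
  have hy1' : y < 1 := lt_trans hyy hy1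
  have hcast : ((j - s : ℕ) : ℝ) = (j : ℝ) - s := Nat.cast_sub hs
  have hsum : (s : ℝ) + ((j - s : ℕ) : ℝ) = (j : ℝ) := by rw [hcast]; ring
  -- j is large
  have hjbig : 1 ≤ ((s : ℝ) + ((j - s : ℕ) : ℝ)) * (y' - y) ^ 2 := by
    rw [hsum]
    have h1 : (y' - y)⁻¹ ^ 2 ≤ (j : ℝ) := by
      calc (y' - y)⁻¹ ^ 2 ≤ (⌈(y' - y)⁻¹ ^ 2⌉₊ : ℝ) := Nat.le_ceil _
        _ ≤ (j : ℝ) := by exact_mod_cast le_trans (Nat.le_succ _) hj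
    have hne : y' - y ≠ 0 := by linarith
    have h2 : (0 : ℝ) < (y' - y) ^ 2 := pow_pos (by linarith) 2
    calc (1 : ℝ) = (y' - y)⁻¹ ^ 2 * (y' - y) ^ 2 := by
          rw [← mul_pow, inv_mul_cancel₀ hne, one_pow]
      _ ≤ (j : ℝ) * (y' - y) ^ 2 := mul_le_mul_of_nonneg_right h1 h2.le
  simp only [betaCDF, Nat.add_sub_cancel]
  -- convert set integrals to interval integrals
  rw [← intervalIntegral.integral_of_le hy0.le, ← intervalIntegral.integral_of_le hy'0.le,
    ← intervalIntegral.integral_of_le (zero_le_one)]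
  set g : ℝ → ℝ := fun t => t ^ s * (1 - t) ^ (j - s) with hg
  have hgi : ∀ a b : ℝ, IntervalIntegrable g volume a b := fun a b =>
    (g_cont s (j - s)).intervalIntegrable a b
  have hB : 0 < ∫ t in (0 : ℝ)..1, g t := by
    apply intervalIntegral.intervalIntegral_pos_of_pos_on (hgi 0 1) _ zero_lt_one
    intro t ht
    have h1 : 0 < t := ht.1
    have h2 : 0 < 1 - t := by linarith [ht.2]
    positivity
  have hadd1 : (∫ t in (0 : ℝ)..y, g t) + ∫ t in y..y', g t = ∫ t in (0 : ℝ)..y', g t :=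
    intervalIntegral.integral_add_adjacent_intervals (hgi _ _) (hgi _ _)
  have hadd2 : (∫ t in (0 : ℝ)..y, g t) + ∫ t in y..(1 : ℝ), g t = ∫ t in (0 : ℝ)..1, g t :=
    intervalIntegral.integral_add_adjacent_intervals (hgi _ _) (hgi _ _)
  have hadd3 : (∫ t in y..y', g t) + ∫ t in y'..(1 : ℝ), g t = ∫ t in y..(1 : ℝ), g t :=
    intervalIntegral.integral_add_adjacent_intervals (hgi _ _) (hgi _ _)
  have key : min (∫ t in y..(1 : ℝ), g t) (∫ t in (0 : ℝ)..y', g t) ≤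
      2 * ∫ t in y..y', g t := by
    rcases le_total ((s : ℝ)) ((j : ℝ) * ((y + y') / 2)) with hc | hc
    · have hD : ∫ t in y'..(1 : ℝ), g t ≤ ∫ t in y..y', g t := by
        apply core s (j - s) hy0 hyy hy1 _ hjbig
        rw [hsum]; exact hc
      calc min (∫ t in y..(1 : ℝ), g t) (∫ t in (0 : ℝ)..y', g t)
          ≤ ∫ t in y..(1 : ℝ), g t := min_le_left _ _
        _ ≤ 2 * ∫ t in y..y', g t := by linarith
    · have hA : ∫ t in (0 : ℝ)..y, g t ≤ ∫ t in y..y', g t := by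
        apply core_reflect s (j - s) hy0 hyy hy1 _ hjbig
        rw [hsum]; exact hc
      calc min (∫ t in y..(1 : ℝ), g t) (∫ t in (0 : ℝ)..y', g t)
          ≤ ∫ t in (0 : ℝ)..y', g t := min_le_right _ _
        _ ≤ 2 * ∫ t in y..y', g t := by linarith
  have h1 : 1 - (∫ t in (0 : ℝ)..y, g t) / (∫ t in (0 : ℝ)..1, g t)
      = (∫ t in y..(1 : ℝ), g t) / (∫ t in (0 : ℝ)..1, g t) := by
    rw [eq_div_iff hB.ne', sub_mul, div_mul_cancel₀ _ hB.ne', one_mul]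
    linarith
  have h2 : (∫ t in (0 : ℝ)..y', g t) / (∫ t in (0 : ℝ)..1, g t)
      - (∫ t in (0 : ℝ)..y, g t) / (∫ t in (0 : ℝ)..1, g t)
      = (∫ t in y..y', g t) / (∫ t in (0 : ℝ)..1, g t) := by
    rw [div_sub_div_same]
    congr 1
    linarith
  rw [h1, h2, min_div_div_right hB.le]
  rw [show (1 / 2 : ℝ) * (min (∫ t in y..(1 : ℝ), g t) (∫ t in (0 : ℝ)..y', g t)
      / ∫ t in (0 : ℝ)..1, g t)
    = (min (∫ t in y..(1 : ℝ), g t) (∫ t in (0 : ℝ)..y', g t) / 2) / ∫ t in (0 : ℝ)..1, g t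
    from by ring]
  rw [div_le_div_iff_of_pos_right hB]
  linarith
end

section
/- (Sequential Halving inversion bound.) Let p_k, p_{k*}, θ ∈ (0,1) with |p_{k*} - θ| < |p_k - θ|, and let p̂_k, p̂_{k*} be empirical means of t independent Bernoulli samples from each arm. Then P(|p̂_{k*} - θ| > |p̂_k - θ|) ≤ 3 exp(-(t/2) Δ_k²), where Δ_k = |p_k - θ| - |p_{k*} - θ| = min{|p_k - p_{k*}|, |p_k - (2θ - p_{k*})|}. -/
open MeasureTheory

/-- The Bernoulli measure on Bool with success probability p (for p ∈ [0,1]). -/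
noncomputable def bern (p : ℝ) : Measure Bool :=
  (PMF.bernoulli (min (Real.toNNReal p) 1) (min_le_right _ _)).toMeasure

instance (p : ℝ) : IsProbabilityMeasure (bern p) := by
  unfold bern; infer_instance

/-- Empirical mean of t Bernoulli samples (Bool-valued, counted as 0/1). -/
noncomputable def empMean {t : ℕ} (v : Fin t → Bool) : ℝ :=
  (∑ i, if v i then (1 : ℝ) else 0) / t


open Real ProbabilityTheory


lemma bern_hoeffding (p l : ℝ) (hp0 : 0 < p) (hp1 : p < 1) :
    p * exp l + (1 - p) ≤ exp (l * p + l ^ 2 / 8) := by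
  set q : ℝ := 1 - p with hq
  have hq0 : 0 < q := by simp [hq]; linarith
  have hD : ∀ x : ℝ, 0 < p * exp x + q := fun x => by positivity
  set F : ℝ → ℝ := fun x => x * p + x ^ 2 / 8 - log (p * exp x + q) with hF
  set F' : ℝ → ℝ := fun x => p + x / 4 - p * exp x / (p * exp x + q) with hF'
  have hdF : ∀ x, HasDerivAt F (F' x) x := by
    intro x
    have h1 : HasDerivAt (fun y : ℝ => p * exp y + q) (p * exp x) x :=
      ((Real.hasDerivAt_exp x).const_mul p).add_const q
    have h2 : HasDerivAt (fun y => log (p * exp y + q)) (p * exp x / (p * exp x + q)) x :=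
      h1.log (hD x).ne'
    have h3 : HasDerivAt (fun y : ℝ => y * p + y ^ 2 / 8) (p + x / 4) x := by
      have := ((hasDerivAt_id x).mul_const p).add
        (((hasDerivAt_pow 2 x)).div_const 8)
      exact this.congr_deriv (by simp; ring)
    exact h3.sub h2
  have hdF' : ∀ x, HasDerivAt F'
      (1 / 4 - (p * exp x * (p * exp x + q) - p * exp x * (p * exp x)) / (p * exp x + q) ^ 2) x := by
    intro x
    have h1 : HasDerivAt (fun y : ℝ => p * exp y + q) (p * exp x) x :=
      ((Real.hasDerivAt_exp x).const_mul p).add_const q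
    have h1' : HasDerivAt (fun y : ℝ => p * exp y) (p * exp x) x :=
      (Real.hasDerivAt_exp x).const_mul p
    have h2 : HasDerivAt (fun y : ℝ => p * exp y / (p * exp y + q))
        ((p * exp x * (p * exp x + q) - p * exp x * (p * exp x)) / (p * exp x + q) ^ 2) x :=
      h1'.div h1 (hD x).ne'
    have h3 : HasDerivAt (fun y : ℝ => p + y / 4) (1 / 4) x := by
      simpa using (hasDerivAt_id x).div_const 4 |>.const_add p
    exact h3.sub h2
  have hF'nonneg : ∀ x, 0 ≤ 1 / 4 -
      (p * exp x * (p * exp x + q) - p * exp x * (p * exp x)) / (p * exp x + q) ^ 2 := by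
    intro x
    rw [sub_nonneg, div_le_iff₀ (by positivity)]
    nlinarith [sq_nonneg (p * exp x - q), (hD x), exp_pos x]
  have hmono : Monotone F' :=
    monotone_of_deriv_nonneg (fun x => (hdF' x).differentiableAt)
      (fun x => by rw [(hdF' x).deriv]; exact hF'nonneg x)
  have hpq1 : p * exp 0 + q = 1 := by rw [Real.exp_zero, hq]; ring
  have hF'0 : F' 0 = 0 := by
    show p + 0 / 4 - p * exp 0 / (p * exp 0 + q) = 0
    rw [hpq1, Real.exp_zero]; ring
  have hF0 : F 0 = 0 := by
    show 0 * p + 0 ^ 2 / 8 - log (p * exp 0 + q) = 0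
    rw [hpq1, Real.log_one]; ring
  have key : 0 ≤ F l := by
    rcases le_total 0 l with hl | hl
    · have hmonoF : MonotoneOn F (Set.Ici 0) := by
        apply monotoneOn_of_deriv_nonneg (convex_Ici 0)
          (fun x _ => (hdF x).differentiableAt.continuousAt.continuousWithinAt)
          (fun x hx => ((hdF x).differentiableAt.differentiableWithinAt))
        intro x hx
        rw [(hdF x).deriv]
        rw [← hF'0]
        exact hmono (le_of_lt (by simpa using hx))
      have := hmonoF (Set.self_mem_Ici) (by exact hl) hl
      rw [hF0] at this; exact this
    · have hantF : AntitoneOn F (Set.Iic 0) := by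
        apply antitoneOn_of_deriv_nonpos (convex_Iic 0)
          (fun x _ => (hdF x).differentiableAt.continuousAt.continuousWithinAt)
          (fun x hx => ((hdF x).differentiableAt.differentiableWithinAt))
        intro x hx
        rw [(hdF x).deriv]
        rw [← hF'0]
        exact hmono (le_of_lt (by simpa using hx))
      have := hantF (by exact hl) Set.self_mem_Iic hl
      rw [hF0] at this; exact this
  have hlog : log (p * exp l + q) ≤ l * p + l ^ 2 / 8 := by
    have := key; simp only [hF] at this; linarith
  calc p * exp l + (1 - p) = exp (log (p * exp l + q)) := by rw [Real.exp_log (hD l)]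
    _ ≤ exp (l * p + l ^ 2 / 8) := Real.exp_le_exp.mpr hlog


lemma bern_true (p : ℝ) (hp1 : p ≤ 1) : bern p {true} = ENNReal.ofReal p := by
  unfold bern
  rw [PMF.toMeasure_apply_singleton _ _ (measurableSet_singleton _)]
  rw [PMF.bernoulli_apply]
  rw [min_eq_left (Real.toNNReal_le_one.mpr hp1)]
  rfl

lemma bern_false (p : ℝ) (hp0 : 0 ≤ p) (hp1 : p ≤ 1) :
    bern p {false} = ENNReal.ofReal (1 - p) := by
  unfold bern
  rw [PMF.toMeasure_apply_singleton _ _ (measurableSet_singleton _)]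
  rw [PMF.bernoulli_apply]
  have h1 : min (Real.toNNReal p) 1 = Real.toNNReal p :=
    min_eq_left (Real.toNNReal_le_one.mpr hp1)
  rw [h1]
  simp only [Bool.cond_false]
  rw [ENNReal.ofReal, show (1 - p).toNNReal = 1 - p.toNNReal from by
    rw [← NNReal.coe_inj, NNReal.coe_sub (Real.toNNReal_le_one.mpr hp1), NNReal.coe_one,
      Real.coe_toNNReal (1 - p) (by linarith), Real.coe_toNNReal p hp0]]

lemma bern_exp_integral (p l : ℝ) (hp0 : 0 ≤ p) (hp1 : p ≤ 1) :
    ∫ b : Bool, exp (l * (if b then (1:ℝ) else 0)) ∂(bern p) = p * exp l + (1 - p) := by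
  rw [integral_fintype (Integrable.of_finite)]
  simp only [measureReal_def]
  rw [Fintype.sum_bool]
  rw [bern_true p hp1, bern_false p hp0 hp1]
  rw [ENNReal.toReal_ofReal hp0, ENNReal.toReal_ofReal (by linarith)]
  simp [Real.exp_zero]

lemma pi_exp_integral (t : ℕ) (p l : ℝ) (hp0 : 0 ≤ p) (hp1 : p ≤ 1) :
    ∫ v : Fin t → Bool, exp (l * ∑ i, (if v i then (1:ℝ) else 0))
        ∂(Measure.pi fun _ => bern p) = (p * exp l + (1 - p)) ^ t := by
  letI : MeasureSpace Bool := ⟨bern p⟩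
  haveI : SigmaFinite (volume : Measure Bool) :=
    inferInstanceAs (SigmaFinite (bern p))
  have hvol : (Measure.pi fun _ : Fin t => bern p) = (volume : Measure (Fin t → Bool)) := by
    rw [MeasureTheory.volume_pi]; rfl
  rw [hvol]
  have : ∀ v : Fin t → Bool, exp (l * ∑ i, (if v i then (1:ℝ) else 0))
      = ∏ i, exp (l * (if v i then (1:ℝ) else 0)) := by
    intro v; rw [Finset.mul_sum, Real.exp_sum]
  simp_rw [this]
  rw [← hvol, MeasureTheory.integral_fintype_prod_eq_pow (ι := Fin t)
    (f := fun x : Bool => exp (l * (if x then (1:ℝ) else 0)))]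
  rw [Fintype.card_fin]
  congr 1
  exact bern_exp_integral p l hp0 hp1

lemma tail_upper (t : ℕ) (ht : 1 ≤ t) (p s : ℝ) (hp0 : 0 < p) (hp1 : p < 1) (hs : 0 ≤ s)
    (hb : p * exp (4*s) + (1 - p) ≤ exp ((4*s) * p + (4*s) ^ 2 / 8)) :
    (Measure.pi fun _ : Fin t => bern p) {v | p + s ≤ empMean v}
      ≤ ENNReal.ofReal (exp (-2 * t * s ^ 2)) := by
  set μ := Measure.pi fun _ : Fin t => bern p with hμ
  haveI : IsProbabilityMeasure μ := by
    rw [hμ]; infer_instance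
  have ht0 : (0:ℝ) < t := by exact_mod_cast ht
  set X : (Fin t → Bool) → ℝ := fun v => ∑ i, (if v i then (1:ℝ) else 0) with hX
  have hev : {v : Fin t → Bool | p + s ≤ empMean v} = {v | (p + s) * t ≤ X v} := by
    ext v
    simp only [Set.mem_setOf_eq, empMean, hX]
    rw [le_div_iff₀ ht0]
  have key := measure_ge_le_exp_mul_mgf (μ := μ) (X := X) ((p + s) * t)
    (t := 4*s) (by positivity) (Integrable.of_finite)
  have hmgf : mgf X μ (4*s) = (p * exp (4*s) + (1 - p)) ^ t := by
    rw [mgf, hμ, hX]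
    exact pi_exp_integral t p (4*s) hp0.le hp1.le
  rw [hmgf] at key
  have hbound : exp (-(4*s) * ((p + s) * t)) * (p * exp (4*s) + (1 - p)) ^ t
      ≤ exp (-2 * t * s ^ 2) := by
    calc exp (-(4*s) * ((p + s) * t)) * (p * exp (4*s) + (1 - p)) ^ t
        ≤ exp (-(4*s) * ((p + s) * t)) * (exp ((4*s) * p + (4*s) ^ 2 / 8)) ^ t := by
          apply mul_le_mul_of_nonneg_left _ (exp_pos _).le
          apply pow_le_pow_left₀ (by nlinarith [Real.exp_pos (4*s), Real.exp_pos (-(4*s))]) hb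
      _ = exp (-(4*s) * ((p + s) * t) + t * ((4*s) * p + (4*s) ^ 2 / 8)) := by
          rw [← Real.exp_nat_mul, ← Real.exp_add]
      _ = exp (-2 * t * s ^ 2) := by congr 1; ring
  have := le_trans key hbound
  rw [hev]
  calc μ {v | (p + s) * t ≤ X v}
      = ENNReal.ofReal ((μ {v | (p + s) * t ≤ X v}).toReal) := by
        rw [ENNReal.ofReal_toReal (measure_ne_top _ _)]
    _ ≤ ENNReal.ofReal (exp (-2 * t * s ^ 2)) := ENNReal.ofReal_le_ofReal this

lemma tail_lower (t : ℕ) (ht : 1 ≤ t) (p s : ℝ) (hp0 : 0 < p) (hp1 : p < 1) (hs : 0 ≤ s)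
    (hb : p * exp (-(4*s)) + (1 - p) ≤ exp ((-(4*s)) * p + (-(4*s)) ^ 2 / 8)) :
    (Measure.pi fun _ : Fin t => bern p) {v | empMean v ≤ p - s}
      ≤ ENNReal.ofReal (exp (-2 * t * s ^ 2)) := by
  set μ := Measure.pi fun _ : Fin t => bern p with hμ
  haveI : IsProbabilityMeasure μ := by
    rw [hμ]; infer_instance
  have ht0 : (0:ℝ) < t := by exact_mod_cast ht
  set X : (Fin t → Bool) → ℝ := fun v => ∑ i, (if v i then (1:ℝ) else 0) with hX
  have hev : {v : Fin t → Bool | empMean v ≤ p - s} = {v | X v ≤ (p - s) * t} := by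
    ext v
    simp only [Set.mem_setOf_eq, empMean, hX]
    rw [div_le_iff₀ ht0]
  have key := measure_le_le_exp_mul_mgf (μ := μ) (X := X) ((p - s) * t)
    (t := -(4*s)) (by simp; positivity) (Integrable.of_finite)
  have hmgf : mgf X μ (-(4*s)) = (p * exp (-(4*s)) + (1 - p)) ^ t := by
    rw [mgf, hμ, hX]
    exact pi_exp_integral t p (-(4*s)) hp0.le hp1.le
  rw [hmgf] at key
  have hbound : exp (-(-(4*s)) * ((p - s) * t)) * (p * exp (-(4*s)) + (1 - p)) ^ t
      ≤ exp (-2 * t * s ^ 2) := by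
    calc exp (-(-(4*s)) * ((p - s) * t)) * (p * exp (-(4*s)) + (1 - p)) ^ t
        ≤ exp (-(-(4*s)) * ((p - s) * t)) * (exp ((-(4*s)) * p + (-(4*s)) ^ 2 / 8)) ^ t := by
          apply mul_le_mul_of_nonneg_left _ (exp_pos _).le
          apply pow_le_pow_left₀ (by nlinarith [Real.exp_pos (4*s), Real.exp_pos (-(4*s))]) hb
      _ = exp (-(-(4*s)) * ((p - s) * t) + t * ((-(4*s)) * p + (-(4*s)) ^ 2 / 8)) := by
          rw [← Real.exp_nat_mul, ← Real.exp_add]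
      _ = exp (-2 * t * s ^ 2) := by congr 1; ring
  have := le_trans key hbound
  rw [hev]
  calc μ {v | X v ≤ (p - s) * t}
      = ENNReal.ofReal ((μ {v | X v ≤ (p - s) * t}).toReal) := by
        rw [ENNReal.ofReal_toReal (measure_ne_top _ _)]
    _ ≤ ENNReal.ofReal (exp (-2 * t * s ^ 2)) := ENNReal.ofReal_le_ofReal this

/-- Sequential Halving inversion bound: let p_k, p_{k*}, θ ∈ (0,1) with
|p_{k*} - θ| < |p_k - θ|, and let p̂_k, p̂_{k*} be empirical means of t independent
Bernoulli(p_k), resp. Bernoulli(p_{k*}), samples (independent of each other). Then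
P(|p̂_{k*} - θ| > |p̂_k - θ|) ≤ 3 exp(-(t/2)·Δ_k²), where Δ_k = |p_k - θ| - |p_{k*} - θ|. -/
theorem sequential_halving_inversion (t : ℕ) (ht : 1 ≤ t) (θ pk pstar : ℝ)
    (hθ0 : 0 < θ) (hθ1 : θ < 1) (hpk0 : 0 < pk) (hpk1 : pk < 1)
    (hps0 : 0 < pstar) (hps1 : pstar < 1)
    (hsub : |pstar - θ| < |pk - θ|) :
    ((Measure.pi fun _ : Fin t => bern pk).prod (Measure.pi fun _ : Fin t => bern pstar))
        {ω | |empMean ω.1 - θ| < |empMean ω.2 - θ|} ≤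
      ENNReal.ofReal (3 * Real.exp (-((t : ℝ) / 2) * (|pk - θ| - |pstar - θ|) ^ 2)) := by
  set a := |pk - θ| with ha
  set b := |pstar - θ| with hb
  set s := (a - b) / 2 with hs
  have hb0 : 0 ≤ b := abs_nonneg _
  have hs0 : 0 < s := by rw [hs]; linarith
  set μ1 := Measure.pi fun _ : Fin t => bern pk with hμ1
  set μ2 := Measure.pi fun _ : Fin t => bern pstar with hμ2
  set E := Real.exp (-2 * (t:ℝ) * s ^ 2) with hE
  set B2 : Set (Fin t → Bool) := {v | pstar + s ≤ empMean v} with hB2def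
  set B3 : Set (Fin t → Bool) := {v | empMean v ≤ pstar - s} with hB3def
  have T2 : μ2 B2 ≤ ENNReal.ofReal E :=
    tail_upper t ht pstar s hps0 hps1 hs0.le (bern_hoeffding pstar (4*s) hps0 hps1)
  have T3 : μ2 B3 ≤ ENNReal.ofReal E :=
    tail_lower t ht pstar s hps0 hps1 hs0.le (bern_hoeffding pstar (-(4*s)) hps0 hps1)
  have hb1 : pstar - θ ≤ b := le_abs_self _
  have hb2 : -b ≤ pstar - θ := neg_abs_le _
  have hEeq : E + (E + E) = 3 * Real.exp (-((t : ℝ) / 2) * (a - b) ^ 2) := by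
    have : E = Real.exp (-((t : ℝ) / 2) * (a - b) ^ 2) := by
      rw [hE, hs]; congr 1; ring
    rw [this]; ring
  have hfinal : ∀ B1 : Set (Fin t → Bool), μ1 B1 ≤ ENNReal.ofReal E →
      {ω : (Fin t → Bool) × (Fin t → Bool) | |empMean ω.1 - θ| < |empMean ω.2 - θ|}
        ⊆ (B1 ×ˢ (Set.univ : Set (Fin t → Bool))) ∪
          (((Set.univ : Set (Fin t → Bool)) ×ˢ B2) ∪ ((Set.univ : Set (Fin t → Bool)) ×ˢ B3)) →
      (μ1.prod μ2) {ω : (Fin t → Bool) × (Fin t → Bool) |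
          |empMean ω.1 - θ| < |empMean ω.2 - θ|} ≤
        ENNReal.ofReal (3 * Real.exp (-((t : ℝ) / 2) * (a - b) ^ 2)) := by
    intro B1 hB1 hss
    calc (μ1.prod μ2) {ω : (Fin t → Bool) × (Fin t → Bool) |
            |empMean ω.1 - θ| < |empMean ω.2 - θ|}
        ≤ (μ1.prod μ2) ((B1 ×ˢ Set.univ) ∪ ((Set.univ ×ˢ B2) ∪ (Set.univ ×ˢ B3))) :=
          measure_mono hss
      _ ≤ (μ1.prod μ2) (B1 ×ˢ Set.univ) +
            ((μ1.prod μ2) (Set.univ ×ˢ B2) + (μ1.prod μ2) (Set.univ ×ˢ B3)) := by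
          refine le_trans (measure_union_le _ _) ?_
          gcongr
          exact measure_union_le _ _
      _ = μ1 B1 * μ2 Set.univ + (μ1 Set.univ * μ2 B2 + μ1 Set.univ * μ2 B3) := by
          rw [Measure.prod_prod, Measure.prod_prod, Measure.prod_prod]
      _ = μ1 B1 + (μ2 B2 + μ2 B3) := by simp
      _ ≤ ENNReal.ofReal E + (ENNReal.ofReal E + ENNReal.ofReal E) := by gcongr
      _ = ENNReal.ofReal (3 * Real.exp (-((t : ℝ) / 2) * (a - b) ^ 2)) := by
          rw [← ENNReal.ofReal_add (exp_pos _).le (exp_pos _).le,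
            ← ENNReal.ofReal_add (exp_pos _).le (by positivity), hEeq]
  rcases le_total θ pk with hcase | hcase
  · have haeq : a = pk - θ := by rw [ha, abs_of_nonneg (by linarith)]
    refine hfinal {v | empMean v ≤ pk - s}
      (tail_lower t ht pk s hpk0 hpk1 hs0.le (bern_hoeffding pk (-(4*s)) hpk0 hpk1)) ?_
    intro ω hω
    by_contra hcon
    simp only [Set.mem_union, Set.mem_prod, Set.mem_univ, true_and, and_true,
      Set.mem_setOf_eq, not_or, not_le, hB2def, hB3def] at hcon
    obtain ⟨h1, h2, h3⟩ := hcon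
    simp only [Set.mem_setOf_eq] at hω
    have he2 : |empMean ω.2 - θ| < (a + b) / 2 :=
      abs_lt.mpr ⟨by rw [hs] at h3; linarith, by rw [hs] at h2; linarith⟩
    have he1 : (a + b) / 2 < |empMean ω.1 - θ| := by
      have : (a + b) / 2 < empMean ω.1 - θ := by rw [hs] at h1; linarith
      exact lt_of_lt_of_le this (le_abs_self _)
    linarith
  · have haeq : a = θ - pk := by rw [ha, abs_of_nonpos (by linarith)]; ring
    refine hfinal {v | pk + s ≤ empMean v}
      (tail_upper t ht pk s hpk0 hpk1 hs0.le (bern_hoeffding pk (4*s) hpk0 hpk1)) ?_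
    intro ω hω
    by_contra hcon
    simp only [Set.mem_union, Set.mem_prod, Set.mem_univ, true_and, and_true,
      Set.mem_setOf_eq, not_or, not_le, hB2def, hB3def] at hcon
    obtain ⟨h1, h2, h3⟩ := hcon
    simp only [Set.mem_setOf_eq] at hω
    have he2 : |empMean ω.2 - θ| < (a + b) / 2 :=
      abs_lt.mpr ⟨by rw [hs] at h3; linarith, by rw [hs] at h2; linarith⟩
    have he1 : (a + b) / 2 < |empMean ω.1 - θ| := by
      have : (a + b) / 2 < θ - empMean ω.1 := by rw [hs] at h1; linarith
      calc (a + b) / 2 < θ - empMean ω.1 := this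
        _ ≤ |empMean ω.1 - θ| := by rw [abs_sub_comm]; exact le_abs_self _
    linarith
end

section
/- Let u < v in (0,1) with Δ = v - u, and let f_{j,v} and F_{j,u} denote the pmf of Binomial(j,v) and CDF of Binomial(j,u). If j < 8/Δ, then Σ_{s=0}^{j} f_{j,v}(s)/F_{j,u}(s) ≤ 1 + 3/Δ. -/
open Finset

set_option maxHeartbeats 1600000

lemma sum_choose_pow (n : ℕ) (x y : ℝ) :
    ∑ s ∈ Finset.range (n + 1), (n.choose s : ℝ) * x ^ s * y ^ (n - s) = (x + y) ^ n := by
  rw [add_pow]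
  exact Finset.sum_congr rfl (fun s _ => by ring)

lemma sum_mul_choose_pow (n : ℕ) (x y : ℝ) :
    ∑ s ∈ Finset.range (n + 1), (s : ℝ) * ((n.choose s : ℝ) * x ^ s * y ^ (n - s))
      = n * x * (x + y) ^ (n - 1) := by
  cases n with
  | zero => simp
  | succ m =>
    rw [Finset.sum_range_succ']
    have h : ∀ i, ((i + 1 : ℕ) : ℝ) * (((m + 1).choose (i + 1) : ℝ) * x ^ (i + 1) * y ^ (m + 1 - (i + 1)))
        = ((m : ℝ) + 1) * x * ((m.choose i : ℝ) * x ^ i * y ^ (m - i)) := by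
      intro i
      have hc : ((m + 1 : ℕ) : ℝ) * (m.choose i : ℝ) = ((m + 1).choose (i + 1) : ℝ) * ((i + 1 : ℕ) : ℝ) := by
        rw [← Nat.cast_mul, ← Nat.cast_mul, Nat.add_one_mul_choose_eq]
      have hs : m + 1 - (i + 1) = m - i := by omega
      rw [hs, pow_succ]
      push_cast at hc ⊢
      linear_combination (-(x ^ i * x * y ^ (m - i))) * hc
    simp only [h]
    simp only [Nat.cast_zero, zero_mul, add_zero]
    rw [← Finset.mul_sum, sum_choose_pow]
    simp only [Nat.add_sub_cancel]
    push_cast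
    ring

lemma sum_mul_mul_choose_pow (n : ℕ) (x y : ℝ) :
    ∑ s ∈ Finset.range (n + 1), (s : ℝ) * ((s : ℝ) - 1) * ((n.choose s : ℝ) * x ^ s * y ^ (n - s))
      = n * ((n : ℝ) - 1) * x ^ 2 * (x + y) ^ (n - 2) := by
  match n with
  | 0 => simp
  | 1 => simp [Finset.sum_range_succ]
  | (m + 2) =>
    rw [Finset.sum_range_succ']
    have h : ∀ i, ((i + 1 : ℕ) : ℝ) * (((i + 1 : ℕ) : ℝ) - 1) *
          (((m + 2).choose (i + 1) : ℝ) * x ^ (i + 1) * y ^ (m + 2 - (i + 1)))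
        = ((m : ℝ) + 2) * x * ((i : ℝ) * (((m + 1).choose i : ℝ) * x ^ i * y ^ (m + 1 - i))) := by
      intro i
      have hc : ((m + 2 : ℕ) : ℝ) * ((m + 1).choose i : ℝ) = ((m + 2).choose (i + 1) : ℝ) * ((i + 1 : ℕ) : ℝ) := by
        rw [← Nat.cast_mul, ← Nat.cast_mul, Nat.add_one_mul_choose_eq]
      have hs : m + 2 - (i + 1) = m + 1 - i := by omega
      rw [hs, pow_succ]
      push_cast at hc ⊢
      linear_combination (-((i : ℝ) * x ^ i * x * y ^ (m + 1 - i))) * hc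
    simp only [h]
    simp only [Nat.cast_zero, zero_mul, mul_zero, add_zero]
    rw [← Finset.mul_sum, sum_mul_choose_pow]
    simp only [Nat.add_sub_cancel]
    push_cast
    ring

/-- let 0 < u < v < 1 with Δ = v - u. If j < 8/Δ then
Σ_{s=0}^{j} f_{j,v}(s)/F_{j,u}(s) ≤ 1 + 3/Δ. -/
theorem ratio_sum_small_j (u v : ℝ) (hu : 0 < u) (huv : u < v) (hv : v < 1)
    (j : ℕ) (hj : (j : ℝ) < 8 / (v - u)) :
    ∑ s ∈ Finset.range (j + 1), binomPMF j v s / binomCDF j u s ≤ 1 + 3 / (v - u) := by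
  have hΔ : 0 < v - u := sub_pos.2 huv
  have hu1 : u < 1 := lt_trans huv hv
  have h1u : 0 < 1 - u := by linarith
  have h1v : 0 < 1 - v := by linarith
  have hv0 : 0 < v := lt_trans hu huv
  have hjd : (j : ℝ) * (v - u) < 8 := by
    rw [lt_div_iff₀ hΔ] at hj; linarith [hj]
  -- basic positivity
  have hfu_pos : ∀ s, s ≤ j → 0 < binomPMF j u s := by
    intro s hs
    unfold binomPMF
    have := Nat.choose_pos hs
    positivity
  have hfu_nonneg : ∀ s, 0 ≤ binomPMF j u s := by
    intro s
    unfold binomPMF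
    positivity
  have hfv_nonneg : ∀ s, 0 ≤ binomPMF j v s := by
    intro s
    unfold binomPMF
    positivity
  have hF_pos : ∀ m, 0 < binomCDF j u m := by
    intro m
    have h0 : 0 < binomPMF j u 0 := hfu_pos 0 (Nat.zero_le j)
    have hle : binomPMF j u 0 ≤ binomCDF j u m :=
      Finset.single_le_sum (f := fun t => binomPMF j u t) (fun i _ => hfu_nonneg i)
        (Finset.mem_range.2 (Nat.succ_pos m))
    linarith
  have hF_mono : ∀ a b : ℕ, a ≤ b → binomCDF j u a ≤ binomCDF j u b := by
    intro a b hab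
    apply Finset.sum_le_sum_of_subset_of_nonneg
    · exact Finset.range_subset_range.2 (by omega)
    · intro i _ _; exact hfu_nonneg i
  -- total masses
  have hsum_u : ∑ s ∈ Finset.range (j + 1), binomPMF j u s = 1 := by
    unfold binomPMF
    rw [sum_choose_pow]
    norm_num
  have hsum_v : ∑ s ∈ Finset.range (j + 1), binomPMF j v s = 1 := by
    unfold binomPMF
    rw [sum_choose_pow]
    norm_num
  set k := ⌈(j : ℝ) * u⌉₊ with hkdef
  have hju_nonneg : 0 ≤ (j : ℝ) * u := by positivity
  have hkj : k ≤ j := Nat.ceil_le.2 (by nlinarith [Nat.cast_nonneg (α := ℝ) j])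
  have hk_ge : (j : ℝ) * u ≤ (k : ℝ) := Nat.le_ceil _
  have hk_lt : (k : ℝ) < (j : ℝ) * u + 1 := Nat.ceil_lt_add_one hju_nonneg
  set σ : ℝ := (j : ℝ) * u * (1 - u) with hσdef
  have hσ_nonneg : 0 ≤ σ := by positivity
  -- moments
  have hP1 : ∑ s ∈ Finset.range (j + 1), (s : ℝ) * binomPMF j u s = (j : ℝ) * u := by
    unfold binomPMF
    rw [sum_mul_choose_pow]
    norm_num
  have hP2 : ∑ s ∈ Finset.range (j + 1), (s : ℝ) * ((s : ℝ) - 1) * binomPMF j u s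
      = (j : ℝ) * ((j : ℝ) - 1) * u ^ 2 := by
    unfold binomPMF
    rw [sum_mul_mul_choose_pow]
    norm_num
  have hmom : ∑ s ∈ Finset.range (j + 1),
      binomPMF j u s * ((s : ℝ) - (j : ℝ) * u + σ) ^ 2 = σ + σ ^ 2 := by
    calc ∑ s ∈ Finset.range (j + 1), binomPMF j u s * ((s : ℝ) - (j : ℝ) * u + σ) ^ 2
        = ∑ s ∈ Finset.range (j + 1), ((s : ℝ) * ((s : ℝ) - 1) * binomPMF j u s
          + (1 + 2 * (σ - (j : ℝ) * u)) * ((s : ℝ) * binomPMF j u s)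
          + (σ - (j : ℝ) * u) ^ 2 * binomPMF j u s) := by
          exact Finset.sum_congr rfl (fun s _ => by ring)
      _ = (∑ s ∈ Finset.range (j + 1), (s : ℝ) * ((s : ℝ) - 1) * binomPMF j u s)
          + ((1 + 2 * (σ - (j : ℝ) * u)) * ∑ s ∈ Finset.range (j + 1), (s : ℝ) * binomPMF j u s)
          + ((σ - (j : ℝ) * u) ^ 2 * ∑ s ∈ Finset.range (j + 1), binomPMF j u s) := by
          rw [Finset.mul_sum, Finset.mul_sum, ← Finset.sum_add_distrib, ← Finset.sum_add_distrib]
      _ = σ + σ ^ 2 := by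
          rw [hP1, hP2, hsum_u]
          ring
  -- tail bound (Cantelli at t = 1)
  have htail : ∑ s ∈ Finset.Ico (k + 1) (j + 1), binomPMF j u s ≤ σ / (1 + σ) := by
    have h1σ2 : (0:ℝ) < (1 + σ) ^ 2 := by positivity
    calc ∑ s ∈ Finset.Ico (k + 1) (j + 1), binomPMF j u s
        ≤ ∑ s ∈ Finset.Ico (k + 1) (j + 1),
            binomPMF j u s * ((s : ℝ) - (j : ℝ) * u + σ) ^ 2 / (1 + σ) ^ 2 := by
          apply Finset.sum_le_sum
          intro s hs
          rw [Finset.mem_Ico] at hs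
          have hs1 : (k : ℝ) + 1 ≤ (s : ℝ) := by exact_mod_cast hs.1
          have h1 : 1 + σ ≤ (s : ℝ) - (j : ℝ) * u + σ := by linarith
          have h2 : (1 + σ) ^ 2 ≤ ((s : ℝ) - (j : ℝ) * u + σ) ^ 2 := by nlinarith
          rw [le_div_iff₀ h1σ2]
          exact mul_le_mul_of_nonneg_left h2 (hfu_nonneg s)
      _ ≤ ∑ s ∈ Finset.range (j + 1),
            binomPMF j u s * ((s : ℝ) - (j : ℝ) * u + σ) ^ 2 / (1 + σ) ^ 2 := by
          apply Finset.sum_le_sum_of_subset_of_nonneg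
          · intro i hi
            rw [Finset.mem_Ico] at hi
            exact Finset.mem_range.2 hi.2
          · intro i _ _
            have := hfu_nonneg i
            positivity
      _ = (σ + σ ^ 2) / (1 + σ) ^ 2 := by
          rw [← Finset.sum_div, hmom]
      _ = σ / (1 + σ) := by
          rw [div_eq_div_iff (by positivity : ((1 + σ) ^ 2 : ℝ) ≠ 0) (by positivity : ((1 + σ) : ℝ) ≠ 0)]
          ring
  -- lower bound on CDF at k
  have hFk : 1 / (1 + σ) ≤ binomCDF j u k := by
    have hsplit : binomCDF j u k + ∑ s ∈ Finset.Ico (k + 1) (j + 1), binomPMF j u s = 1 := by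
      rw [← hsum_u]
      unfold binomCDF
      rw [Finset.range_eq_Ico, Finset.range_eq_Ico]
      exact Finset.sum_Ico_consecutive (fun s => binomPMF j u s) (by omega : 0 ≤ k + 1) (by omega : k + 1 ≤ j + 1)
    have h1σ : (0:ℝ) < 1 + σ := by linarith
    rw [div_le_iff₀ h1σ]
    rw [le_div_iff₀ h1σ] at htail
    nlinarith [htail, hsplit]
  -- Zone 2 bound
  have hzone2 : ∑ s ∈ Finset.Ico k (j + 1), binomPMF j v s / binomCDF j u s ≤ 1 + σ := by
    have hFk_pos : 0 < binomCDF j u k := hF_pos k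
    have hmass : ∑ s ∈ Finset.Ico k (j + 1), binomPMF j v s ≤ 1 := by
      rw [← hsum_v, Finset.range_eq_Ico]
      apply Finset.sum_le_sum_of_subset_of_nonneg
      · intro i hi
        rw [Finset.mem_Ico] at hi ⊢
        omega
      · intro i _ _; exact hfv_nonneg i
    calc ∑ s ∈ Finset.Ico k (j + 1), binomPMF j v s / binomCDF j u s
        ≤ ∑ s ∈ Finset.Ico k (j + 1), binomPMF j v s / binomCDF j u k := by
          apply Finset.sum_le_sum
          intro s hs
          rw [Finset.mem_Ico] at hs
          gcongr
          · exact hfv_nonneg s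
          · exact hF_mono k s hs.1
      _ = (∑ s ∈ Finset.Ico k (j + 1), binomPMF j v s) / binomCDF j u k := by
          rw [Finset.sum_div]
      _ ≤ 1 / binomCDF j u k := by
          gcongr
      _ ≤ 1 + σ := by
          have h1σ : (0:ℝ) < 1 + σ := by linarith
          rw [div_le_iff₀ hFk_pos]
          rw [div_le_iff₀ h1σ] at hFk
          nlinarith [hFk, hFk_pos]
  -- Zone 1 bound
  set w : ℝ := (1 - v) / (1 - u) with hwdef
  set q : ℝ := v * (1 - u) / (u * (1 - v)) with hqdef
  have hw0 : 0 < w := by rw [hwdef]; exact div_pos h1v h1u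
  have hq0 : (0:ℝ) < q := by rw [hqdef]; exact div_pos (mul_pos hv0 h1u) (mul_pos hu h1v)
  have hq1 : 1 < q := by
    rw [hqdef, lt_div_iff₀ (by positivity)]
    nlinarith
  have hqw : q * w = v / u := by
    rw [hqdef, hwdef]
    field_simp
  -- key bound : w^j * q^k ≤ q
  have hkey : w ^ j * q ^ k ≤ q := by
    have hwq1 : w * q ^ u ≤ 1 := by
      have hAM := Real.geom_mean_le_arith_mean2_weighted hu.le (by linarith : (0:ℝ) ≤ 1 - u)
        (by positivity : (0:ℝ) ≤ v / u) (le_of_lt hw0) (by ring)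
      have hrhs : u * (v / u) + (1 - u) * w = 1 := by
        rw [hwdef]; field_simp; ring
      rw [hrhs] at hAM
      have hqform : q = (v / u) / w := by
        rw [hqdef, hwdef]
        field_simp
      have : w * q ^ u = (v / u) ^ u * w ^ (1 - u) := by
        rw [hqform, Real.div_rpow (by positivity) hw0.le, Real.rpow_sub hw0, Real.rpow_one]
        field_simp
      rw [this]
      exact hAM
    have e1 : w ^ j * q ^ k = w ^ (j : ℝ) * q ^ (k : ℝ) := by
      rw [Real.rpow_natCast, Real.rpow_natCast]
    have e2 : q ^ (k : ℝ) ≤ q ^ ((j : ℝ) * u + 1) :=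
      Real.rpow_le_rpow_of_exponent_le hq1.le (by linarith)
    have e3 : w ^ (j : ℝ) * q ^ ((j : ℝ) * u + 1) = (w * q ^ u) ^ j * q := by
      rw [Real.rpow_add hq0, Real.rpow_one, mul_pow]
      rw [← Real.rpow_natCast w j, ← Real.rpow_natCast (q ^ u) j,
        ← Real.rpow_mul hq0.le, mul_comm u (j : ℝ)]
      ring
    have e4 : (w * q ^ u) ^ j ≤ 1 := by
      apply pow_le_one₀ (by positivity) hwq1
    calc w ^ j * q ^ k = w ^ (j : ℝ) * q ^ (k : ℝ) := e1
      _ ≤ w ^ (j : ℝ) * q ^ ((j : ℝ) * u + 1) := by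
          apply mul_le_mul_of_nonneg_left e2 (by positivity)
      _ = (w * q ^ u) ^ j * q := e3
      _ ≤ 1 * q := mul_le_mul_of_nonneg_right e4 hq0.le
      _ = q := one_mul q
  have hzone1 : ∑ s ∈ Finset.Ico 0 k, binomPMF j v s / binomCDF j u s
      ≤ v * (1 - u) / (v - u) := by
    have hterm : ∀ s ∈ Finset.Ico 0 k, binomPMF j v s / binomCDF j u s ≤ w ^ j * q ^ s := by
      intro s hs
      rw [Finset.mem_Ico] at hs
      have hsj : s ≤ j := le_trans (le_of_lt hs.2) hkj
      have hfle : binomPMF j u s ≤ binomCDF j u s :=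
        Finset.single_le_sum (f := fun t => binomPMF j u t) (fun i _ => hfu_nonneg i)
          (Finset.mem_range.2 (by omega))
      have h1 : binomPMF j v s / binomCDF j u s ≤ binomPMF j v s / binomPMF j u s := by
        gcongr
        · exact hfv_nonneg s
        · exact hfu_pos s hsj
      have h2 : binomPMF j v s / binomPMF j u s = w ^ j * q ^ s := by
        have hjs : j = s + (j - s) := by omega
        have hwq : w ^ j * q ^ s = (v / u) ^ s * w ^ (j - s) := by
          calc w ^ j * q ^ s = w ^ (s + (j - s)) * q ^ s := by rw [← hjs]
            _ = (q * w) ^ s * w ^ (j - s) := by rw [pow_add, mul_pow]; ring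
            _ = (v / u) ^ s * w ^ (j - s) := by rw [hqw]
        rw [hwq, hwdef]
        unfold binomPMF
        have hC : (j.choose s : ℝ) ≠ 0 := Nat.cast_ne_zero.2 (Nat.choose_pos hsj).ne'
        have hus : u ^ s ≠ 0 := pow_ne_zero _ (ne_of_gt hu)
        have h1us : (1 - u) ^ (j - s) ≠ 0 := pow_ne_zero _ (ne_of_gt h1u)
        rw [div_pow, div_pow]
        field_simp
      exact h1.trans (le_of_eq h2)
    calc ∑ s ∈ Finset.Ico 0 k, binomPMF j v s / binomCDF j u s
        ≤ ∑ s ∈ Finset.Ico 0 k, w ^ j * q ^ s := Finset.sum_le_sum hterm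
      _ = w ^ j * ((q ^ k - 1) / (q - 1)) := by
          rw [← Finset.range_eq_Ico, ← Finset.mul_sum, geom_sum_eq (ne_of_gt hq1)]
      _ ≤ q / (q - 1) := by
          have hq1' : (0:ℝ) < q - 1 := by linarith
          rw [mul_div_assoc']
          gcongr
          nlinarith [hkey, pow_nonneg hw0.le j]
      _ = v * (1 - u) / (v - u) := by
          have hq1' : (0:ℝ) < q - 1 := by linarith
          rw [div_eq_div_iff (ne_of_gt hq1') (ne_of_gt hΔ), hqdef]
          field_simp
          ring
  -- assembly
  have hsplitv : ∑ s ∈ Finset.range (j + 1), binomPMF j v s / binomCDF j u s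
      = (∑ s ∈ Finset.Ico 0 k, binomPMF j v s / binomCDF j u s)
        + ∑ s ∈ Finset.Ico k (j + 1), binomPMF j v s / binomCDF j u s := by
    rw [Finset.range_eq_Ico,
      ← Finset.sum_Ico_consecutive _ (Nat.zero_le k) (by omega : k ≤ j + 1)]
  have hnum : v * (1 - u) + σ * (v - u) ≤ 3 := by
    have h8 : σ * (v - u) ≤ 8 * (u * (1 - u)) := by
      have : σ * (v - u) = ((j : ℝ) * (v - u)) * (u * (1 - u)) := by rw [hσdef]; ring
      rw [this]
      exact mul_le_mul_of_nonneg_right (le_of_lt hjd) (by positivity)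
    nlinarith [sq_nonneg (u - 7 / 16), h8]
  have hlast : v * (1 - u) / (v - u) + σ ≤ 3 / (v - u) := by
    rw [div_add' _ _ _ (ne_of_gt hΔ), div_le_div_iff₀ hΔ hΔ]
    nlinarith [hnum, hΔ]
  rw [hsplitv]
  linarith [hzone1, hzone2, hlast]
end
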